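/- arXiv:1712.00809 — 5 statements merged into one kernel-verified Lean document; each statement's English description precedes it below -/
import Mathlib

section
/- The only 2-distinguishing critical graphs are K₂ and its complement; in particular, every graph on at least 3 vertices with distinguishing number 2 contains a proper induced subgraph with distinguishing number 2. -/
/-- A labeling with `r` labels is distinguishing if the only automorphism
preserving all labels is the identity. -/
def IsDistinguishing {V : Type*} (G : SimpleGraph V) (r : ℕ) (f : V → Fin r) : Prop :=
  ∀ φ : G ≃g G, (∀ v, f (φ v) = f v) → ∀ v, φ v = v

/-- The distinguishing number of a graph. -/
noncomputable def distNum {V : Type*} (G : SimpleGraph V) : ℕ :=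
  sInf {r : ℕ | ∃ f : V → Fin r, IsDistinguishing G r f}

/-- A graph is `d`-distinguishing critical if its distinguishing number is `d`
and no proper induced subgraph has distinguishing number `d`. -/
def DistCritical {V : Type*} (G : SimpleGraph V) (d : ℕ) : Prop :=
  distNum G = d ∧ ∀ s : Set V, s ≠ Set.univ → distNum (G.induce s) ≠ d

/-- The disjoint union of `c` copies of a graph `H`. -/
def copies {W : Type*} (c : ℕ) (H : SimpleGraph W) : SimpleGraph (Fin c × W) where
  Adj a b := a.1 = b.1 ∧ H.Adj a.2 b.2
  symm := ⟨fun a b h => ⟨h.1.symm, h.2.symm⟩⟩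
  loopless := ⟨fun a h => H.loopless.irrefl a.2 h.2⟩

/-- `numDistLab G k` is the number of inequivalent `k`-distinguishing labelings of `G`,
two labelings being equivalent when some automorphism of `G` maps one to the other. -/
noncomputable def numDistLab {V : Type*} (G : SimpleGraph V) (k : ℕ) : ℕ :=
  Nat.card (Quot (fun f g : {f : V → Fin k // IsDistinguishing G k f} =>
    ∃ φ : G ≃g G, ∀ v, f.1 (φ v) = g.1 v))

lemma pair_distNum {W : Type*} (H : SimpleGraph W) (a b : W) (hab : a ≠ b)
    (hW : ∀ x, x = a ∨ x = b) : distNum H = 2 := by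
  letI := Classical.decEq W
  have hadj : ∀ x y : W, H.Adj (Equiv.swap a b x) (Equiv.swap a b y) ↔ H.Adj x y := by
    intro x y
    rcases hW x with rfl | rfl <;> rcases hW y with rfl | rfl
    · simp
    · rw [Equiv.swap_apply_left, Equiv.swap_apply_right]; exact H.adj_comm _ _
    · rw [Equiv.swap_apply_left, Equiv.swap_apply_right]; exact H.adj_comm _ _
    · simp
  let σ : H ≃g H := ⟨Equiv.swap a b, fun {x y} => hadj x y⟩
  have hσa : σ a = b := Equiv.swap_apply_left a b
  have hmem2 : (2:ℕ) ∈ {r : ℕ | ∃ f : W → Fin r, IsDistinguishing H r f} := by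
    refine ⟨fun x => if x = a then 0 else 1, ?_⟩
    intro φ hφ v
    have ha : φ a = a := by
      rcases hW (φ a) with h | h
      · exact h
      · exfalso
        have := hφ a
        rw [h] at this
        simp [hab.symm] at this
    have hb : φ b = b := by
      rcases hW (φ b) with h | h
      · exfalso
        have := hφ b
        rw [h] at this
        simp [hab.symm] at this
      · exact h
    rcases hW v with rfl | rfl
    · exact ha
    · exact hb
  refine le_antisymm (Nat.sInf_le hmem2) (le_csInf ⟨2, hmem2⟩ ?_)
  rintro m ⟨f, hf⟩
  by_contra hlt
  push_neg at hlt
  interval_cases m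
  · exact (f a).elim0
  · have := hf σ (fun v => Subsingleton.elim _ _) a
    rw [hσa] at this
    exact hab this.symm


theorem stmt1 {V : Type*} [Fintype V] (G : SimpleGraph V) :
    (DistCritical G 2 →
      Nonempty (G ≃g (⊤ : SimpleGraph (Fin 2))) ∨
      Nonempty (G ≃g (⊥ : SimpleGraph (Fin 2)))) ∧
    (3 ≤ Fintype.card V → distNum G = 2 →
      ∃ s : Set V, s ≠ Set.univ ∧ distNum (G.induce s) = 2) := by
  letI := Classical.decEq V
  have part2 : 3 ≤ Fintype.card V → distNum G = 2 →
      ∃ s : Set V, s ≠ Set.univ ∧ distNum (G.induce s) = 2 := by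
    intro hcard _
    obtain ⟨x, y, z, hxy, hxz, hyz⟩ := (Fintype.two_lt_card_iff (α := V)).mp (by omega)
    refine ⟨{x, y}, ?_, ?_⟩
    · intro h
      have hz : z ∈ ({x, y} : Set V) := h ▸ Set.mem_univ z
      rcases hz with h' | h'
      · exact hxz h'.symm
      · exact hyz h'.symm
    · refine pair_distNum _ ⟨x, Set.mem_insert x {y}⟩ ⟨y, Set.mem_insert_iff.mpr (Or.inr rfl)⟩
        (fun h => hxy (congrArg Subtype.val h)) ?_
      rintro ⟨w, hw⟩
      rcases hw with rfl | rfl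
      · left; rfl
      · right; rfl
  refine ⟨?_, part2⟩
  rintro ⟨hd2, hcrit⟩
  have hle : Fintype.card V ≤ 2 := by
    by_contra h
    push_neg at h
    obtain ⟨s, hs, hds⟩ := part2 (by omega) hd2
    exact hcrit s hs hds
  have hge : 2 ≤ Fintype.card V := by
    by_contra h
    push_neg at h
    have hcase : Fintype.card V = 0 ∨ Fintype.card V = 1 := by omega
    rcases hcase with hcv | hcv
    · haveI : IsEmpty V := Fintype.card_eq_zero_iff.mp hcv
      have h0 : (0:ℕ) ∈ {r : ℕ | ∃ f : V → Fin r, IsDistinguishing G r f} :=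
        ⟨fun v => isEmptyElim v, fun φ _ v => isEmptyElim v⟩
      have hl := Nat.sInf_le h0
      unfold distNum at hd2
      omega
    · haveI : Subsingleton V := Fintype.card_le_one_iff_subsingleton.mp (by omega)
      have h1 : (1:ℕ) ∈ {r : ℕ | ∃ f : V → Fin r, IsDistinguishing G r f} :=
        ⟨fun _ => 0, fun φ _ v => Subsingleton.elim _ _⟩
      have hl := Nat.sInf_le h1
      unfold distNum at hd2
      omega
  have hcv : Fintype.card V = 2 := le_antisymm hle hge
  obtain ⟨a, b, hab, huniv⟩ := (Nat.card_eq_two_iff (α := V)).mp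
    (by rw [Nat.card_eq_fintype_card]; exact hcv)
  have hW : ∀ x : V, x = a ∨ x = b := by
    intro x
    have : x ∈ ({a, b} : Set V) := huniv ▸ Set.mem_univ x
    exact this
  let e : V ≃ Fin 2 :=
    { toFun := fun x => if x = a then 0 else 1
      invFun := fun i => if i = 0 then a else b
      left_inv := by
        intro x
        rcases hW x with rfl | rfl
        · simp
        · simp [hab.symm]
      right_inv := by
        intro i
        fin_cases i
        · simp
        · simp [hab.symm] }
  have he : ∀ x y : V, (e x ≠ e y) ↔ (x ≠ y) := fun x y =>
    not_iff_not.mpr ⟨fun h => e.injective h, fun h => h ▸ rfl⟩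
  by_cases hadj : G.Adj a b
  · left
    refine ⟨⟨e, fun {x y} => ?_⟩⟩
    rcases hW x with rfl | rfl <;> rcases hW y with rfl | rfl
    · simp
    · simp [he, hab, hadj]
    · simpa [he, hab.symm] using hadj.symm
    · simp
  · right
    refine ⟨⟨e, fun {x y} => ?_⟩⟩
    rcases hW x with rfl | rfl <;> rcases hW y with rfl | rfl
    · simp
    · simp [hadj]
    · simp
      exact fun h => hadj h.symm
    · simp
end

section
/- If G is a d-distinguishing critical graph with d ≥ 3, then G contains no induced star K_{1,d}. -/
/-- Distinguishing labelings transfer along graph isomorphisms. -/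
lemma isDistinguishing_transfer {V W : Type*} {G : SimpleGraph V} {H : SimpleGraph W}
    (e : G ≃g H) {r : ℕ} (f : V → Fin r) (hf : IsDistinguishing G r f) :
    IsDistinguishing H r (f ∘ e.symm) := by
  intro ψ hψ w
  set φ : G ≃g G := (e.trans ψ).trans e.symm with hφdef
  have hφ : ∀ v, f (φ v) = f v := by
    intro v
    have h := hψ (e v)
    simpa [hφdef] using h
  have h := hf φ hφ (e.symm w)
  have h' : e.symm (ψ w) = e.symm w := by
    simpa [hφdef] using h
  exact e.symm.injective.eq_iff.mp h'

/-- The distinguishing number is invariant under isomorphism. -/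
lemma distNum_congr {V W : Type*} {G : SimpleGraph V} {H : SimpleGraph W} (e : G ≃g H) :
    distNum G = distNum H := by
  unfold distNum
  congr 1
  ext r
  constructor
  · rintro ⟨f, hf⟩; exact ⟨f ∘ e.symm, isDistinguishing_transfer e f hf⟩
  · rintro ⟨f, hf⟩; exact ⟨f ∘ e.symm.symm, isDistinguishing_transfer e.symm f hf⟩

/-- A graph with no edges whose vertex set has `d` elements has distinguishing number `d`. -/
lemma distNum_eq_of_adjFalse {W : Type*} (H : SimpleGraph W) (hA : ∀ u v, ¬ H.Adj u v)
    {d : ℕ} (e : W ≃ Fin d) : distNum H = d := by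
  have hmem : d ∈ {r : ℕ | ∃ f : W → Fin r, IsDistinguishing H r f} := by
    refine ⟨e, fun φ hφ v => e.injective (hφ v)⟩
  classical
  refine le_antisymm (Nat.sInf_le hmem) (le_csInf ⟨d, hmem⟩ ?_)
  rintro r ⟨f, hf⟩
  by_contra hlt
  push_neg at hlt
  obtain ⟨i, j, hij, hfe⟩ := Fintype.exists_ne_map_eq_of_card_lt (f ∘ e.symm)
    (by simpa using hlt)
  set u := e.symm i with hu
  set v := e.symm j with hv
  have huv : u ≠ v := fun h => hij (e.symm.injective h)
  have hfuv : f u = f v := hfe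
  let φ : H ≃g H := ⟨Equiv.swap u v, by
    intro a b
    exact iff_of_false (hA _ _) (hA _ _)⟩
  have hφ : ∀ x, f (φ x) = f x := by
    intro x
    show f (Equiv.swap u v x) = f x
    rcases eq_or_ne x u with rfl | hxu
    · rw [Equiv.swap_apply_left]; exact hfuv.symm
    rcases eq_or_ne x v with rfl | hxv
    · rw [Equiv.swap_apply_right]; exact hfuv
    · rw [Equiv.swap_apply_of_ne_of_ne hxu hxv]
  have h1 : Equiv.swap u v u = u := hf φ hφ u
  rw [Equiv.swap_apply_left] at h1
  exact huv h1.symm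

/-- The star `K_{1,d}` has distinguishing number `d` for `d ≥ 2`. -/
lemma distNum_star (d : ℕ) (hd : 2 ≤ d) :
    distNum (completeBipartiteGraph (Fin 1) (Fin d)) = d := by
  set K := completeBipartiteGraph (Fin 1) (Fin d) with hK
  have hmem : d ∈ {r : ℕ | ∃ f : Fin 1 ⊕ Fin d → Fin r, IsDistinguishing K r f} := by
    refine ⟨Sum.elim (fun _ => ⟨0, by omega⟩) id, ?_⟩
    intro φ hφ
    -- First: φ fixes the center.
    have h0 : φ (Sum.inl 0) = Sum.inl 0 := by
      rcases hc : φ (Sum.inl 0) with x | j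
      · rw [Fin.eq_zero x]
      · exfalso
        have i0 : (⟨0, by omega⟩ : Fin d) ≠ ⟨1, by omega⟩ := by
          intro h; simpa using congrArg Fin.val h
        have hadj : ∀ k : Fin d, K.Adj (Sum.inl 0) (Sum.inr k) := by
          intro k; simp [hK]
        have h1 : K.Adj (Sum.inr j) (φ (Sum.inr ⟨0, by omega⟩)) := by
          rw [← hc]; exact φ.map_adj_iff.mpr (hadj _)
        have h2 : K.Adj (Sum.inr j) (φ (Sum.inr ⟨1, by omega⟩)) := by
          rw [← hc]; exact φ.map_adj_iff.mpr (hadj _)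
        have e1 : φ (Sum.inr ⟨0, by omega⟩) = Sum.inl 0 := by
          rcases h : φ (Sum.inr ⟨0, by omega⟩) with x | k
          · rw [Fin.eq_zero x]
          · rw [h] at h1; simp [hK] at h1
        have e2 : φ (Sum.inr ⟨1, by omega⟩) = Sum.inl 0 := by
          rcases h : φ (Sum.inr ⟨1, by omega⟩) with x | k
          · rw [Fin.eq_zero x]
          · rw [h] at h2; simp [hK] at h2
        exact i0 (by simpa using φ.injective (e1.trans e2.symm))
    intro v
    rcases v with x | j
    · rw [Fin.eq_zero x]; exact h0
    · rcases h : φ (Sum.inr j) with x | k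
      · exfalso
        have : φ (Sum.inr j) = φ (Sum.inl 0) := by rw [h, h0, Fin.eq_zero x]
        simpa using φ.injective this
      · have hl := hφ (Sum.inr j)
        rw [h] at hl
        simp only [Sum.elim_inr, id] at hl
        exact congrArg Sum.inr hl
  refine le_antisymm (Nat.sInf_le hmem) (le_csInf ⟨d, hmem⟩ ?_)
  rintro r ⟨f, hf⟩
  by_contra hlt
  push_neg at hlt
  obtain ⟨i, j, hij, hfe⟩ := Fintype.exists_ne_map_eq_of_card_lt (fun k : Fin d => f (Sum.inr k))
    (by simpa using hlt)
  have hL : ∀ a : Fin 1 ⊕ Fin d,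
      (Equiv.swap (Sum.inr i : Fin 1 ⊕ Fin d) (Sum.inr j) a).isLeft = a.isLeft := by
    intro a
    rcases a with x | k
    · rw [Equiv.swap_apply_of_ne_of_ne (by simp) (by simp)]
    · rcases eq_or_ne k i with rfl | hki
      · rw [Equiv.swap_apply_left]; rfl
      rcases eq_or_ne k j with rfl | hkj
      · rw [Equiv.swap_apply_right]; rfl
      · rw [Equiv.swap_apply_of_ne_of_ne (by simpa using hki) (by simpa using hkj)]
  have hR : ∀ a : Fin 1 ⊕ Fin d,
      (Equiv.swap (Sum.inr i : Fin 1 ⊕ Fin d) (Sum.inr j) a).isRight = a.isRight := by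
    intro a
    have := hL a
    rcases h : Equiv.swap (Sum.inr i : Fin 1 ⊕ Fin d) (Sum.inr j) a with y | l <;>
      rcases a with x | k <;> simp_all
  let ψ : K ≃g K := ⟨Equiv.swap (Sum.inr i) (Sum.inr j), by
    intro a b
    simp only [hK, completeBipartiteGraph_adj, Equiv.coe_fn_mk, hL, hR]⟩
  have hψ : ∀ x, f (ψ x) = f x := by
    intro x
    show f (Equiv.swap (Sum.inr i) (Sum.inr j) x) = f x
    rcases x with x | k
    · rw [Equiv.swap_apply_of_ne_of_ne (by simp) (by simp)]
    · rcases eq_or_ne k i with rfl | hki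
      · rw [Equiv.swap_apply_left]; exact hfe.symm
      rcases eq_or_ne k j with rfl | hkj
      · rw [Equiv.swap_apply_right]; exact hfe
      · rw [Equiv.swap_apply_of_ne_of_ne (by simpa using hki) (by simpa using hkj)]
  have h1 : Equiv.swap (Sum.inr i : Fin 1 ⊕ Fin d) (Sum.inr j) (Sum.inr i) = Sum.inr i :=
    hf ψ hψ (Sum.inr i)
  rw [Equiv.swap_apply_left] at h1
  exact hij (Sum.inr.inj h1).symm

/-- The nonzero elements of `Fin 1 ⊕ Fin d` are equivalent to `Fin d`. -/
def sumNeEquiv (d : ℕ) : {y : Fin 1 ⊕ Fin d // y ≠ Sum.inl 0} ≃ Fin d where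
  toFun y := y.1.getRight (by
    obtain ⟨x | j, hy⟩ := y
    · exact absurd (by rw [Fin.eq_zero x]) hy
    · simp)
  invFun j := ⟨Sum.inr j, by simp⟩
  left_inv := by
    rintro ⟨x | j, hy⟩
    · exact absurd (by rw [Fin.eq_zero x]) hy
    · rfl
  right_inv j := rfl

theorem stmt5 {V : Type*} (G : SimpleGraph V) (d : ℕ) (hd : 3 ≤ d)
    (hcrit : DistCritical G d) :
    ¬ ∃ s : Set V, Nonempty ((G.induce s) ≃g completeBipartiteGraph (Fin 1) (Fin d)) := by
  rintro ⟨s, ⟨e⟩⟩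
  have hstar := distNum_star d (by omega)
  by_cases hs : s = Set.univ
  · subst hs
    set c : V := (e.symm (Sum.inl 0)).1 with hc
    refine hcrit.2 {c}ᶜ ?_ ?_
    · intro h
      have : c ∈ ({c}ᶜ : Set V) := h ▸ Set.mem_univ c
      simp at this
    · -- the induced subgraph on the leaves is edgeless with d vertices
      have hA : ∀ u v : ↥({c}ᶜ : Set V), ¬ (G.induce {c}ᶜ).Adj u v := by
        intro u v hadj
        have hG : G.Adj u.1 v.1 := hadj
        have hK : (completeBipartiteGraph (Fin 1) (Fin d)).Adj
            (e ⟨u.1, Set.mem_univ _⟩) (e ⟨v.1, Set.mem_univ _⟩) := by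
          refine e.map_adj_iff.mpr ?_
          exact hG
        have hune : e ⟨u.1, Set.mem_univ _⟩ ≠ Sum.inl 0 := by
          intro h
          have : (⟨u.1, Set.mem_univ _⟩ : (Set.univ : Set V)) = e.symm (Sum.inl 0) := by
            rw [← h]; exact (e.symm_apply_apply _).symm
          exact u.2 (by simpa [hc] using congrArg Subtype.val this)
        have hvne : e ⟨v.1, Set.mem_univ _⟩ ≠ Sum.inl 0 := by
          intro h
          have : (⟨v.1, Set.mem_univ _⟩ : (Set.univ : Set V)) = e.symm (Sum.inl 0) := by
            rw [← h]; exact (e.symm_apply_apply _).symm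
          exact v.2 (by simpa [hc] using congrArg Subtype.val this)
        rcases hu : e ⟨u.1, Set.mem_univ _⟩ with x | i
        · exact hune (by rw [hu, Fin.eq_zero x])
        rcases hv : e ⟨v.1, Set.mem_univ _⟩ with y | j
        · exact hvne (by rw [hv, Fin.eq_zero y])
        rw [hu, hv] at hK
        simp at hK
      refine distNum_eq_of_adjFalse _ hA ?_
      -- build the equivalence ↥{c}ᶜ ≃ Fin d
      let E : V ≃ (Fin 1 ⊕ Fin d) := (Equiv.Set.univ V).symm.trans e.toEquiv
      have hEc : E c = Sum.inl 0 := by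
        show e ((Equiv.Set.univ V).symm c) = Sum.inl 0
        have h : (Equiv.Set.univ V).symm c = e.symm (Sum.inl 0) := Subtype.ext rfl
        rw [h]; exact e.apply_symm_apply _
      refine (E.subtypeEquiv (fun x => ?_)).trans (sumNeEquiv d)
      show x ∈ ({c}ᶜ : Set V) ↔ E x ≠ Sum.inl 0
      rw [Set.mem_compl_singleton_iff, ← hEc]
      exact E.injective.ne_iff.symm
  · exact hcrit.2 s hs ((distNum_congr e).trans hstar)
end

section
/- If G is a connected d-distinguishing critical graph for some d ≥ 2 and G is triangle-free, then G is isomorphic to K₂, K_{d−1,d−1}, or C₅. -/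
open SimpleGraph Finset

namespace Crit

variable {V : Type*}

lemma distNum_le {G : SimpleGraph V} {r : ℕ} (f : V → Fin r) (hf : IsDistinguishing G r f) :
    distNum G ≤ r := Nat.sInf_le ⟨f, hf⟩

lemma not_isDist {G : SimpleGraph V} {d : ℕ} (hG : distNum G = d) {r : ℕ} (hr : r < d)
    (f : V → Fin r) : ¬ IsDistinguishing G r f := fun hf => absurd (hG ▸ distNum_le f hf) (by omega)

lemma distNum_induce_indep [Fintype V] {G : SimpleGraph V} (s : Finset V)
    (hs : ∀ a ∈ s, ∀ b ∈ s, G.Adj a b → False) :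
    distNum (G.induce (↑s : Set V)) = s.card := by
  classical
  have hcard : Fintype.card (↑s : Set V) = s.card := Fintype.card_coe s
  have hnoadj : ∀ a b : (↑s : Set V), ¬ (G.induce (↑s : Set V)).Adj a b := by
    rintro ⟨a, ha⟩ ⟨b, hb⟩ hab
    exact hs a (by simpa using ha) b (by simpa using hb) (by simpa using hab)
  have hmem : ∃ f : (↑s : Set V) → Fin s.card,
      IsDistinguishing (G.induce (↑s : Set V)) s.card f := by
    refine ⟨Fintype.equivFinOfCardEq hcard, fun φ h v => ?_⟩
    exact (Fintype.equivFinOfCardEq hcard).injective (h v)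
  refine le_antisymm (Nat.sInf_le hmem) (le_csInf ⟨_, hmem⟩ ?_)
  rintro r ⟨f, hf⟩
  by_contra hlt
  push_neg at hlt
  obtain ⟨a, b, hab, hfab⟩ := Fintype.exists_ne_map_eq_of_card_lt f
    (by rw [Fintype.card_fin, hcard]; omega)
  have hrel : ∀ {x y : (↑s : Set V)}, (G.induce (↑s : Set V)).Adj (Equiv.swap a b x)
      (Equiv.swap a b y) ↔ (G.induce (↑s : Set V)).Adj x y := by
    intro x y
    constructor
    · intro h; exact absurd h (hnoadj _ _)
    · intro h; exact absurd h (hnoadj _ _)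
  have hpres : ∀ v, f (Equiv.swap a b v) = f v := by
    intro v
    rcases eq_or_ne v a with rfl | hva
    · rw [Equiv.swap_apply_left]; exact hfab.symm
    rcases eq_or_ne v b with rfl | hvb
    · rw [Equiv.swap_apply_right]; exact hfab
    · rw [Equiv.swap_apply_of_ne_of_ne hva hvb]
  have key : (Equiv.swap a b) a = a :=
    hf ⟨Equiv.swap a b, hrel⟩ hpres a
  rw [Equiv.swap_apply_left] at key
  exact hab key.symm

lemma no_big_indep [Fintype V] {G : SimpleGraph V} {d : ℕ} (hd : 2 ≤ d)
    (hconn : G.Connected) (hcrit : DistCritical G d) (s : Finset V) (hcard : d ≤ s.card)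
    (hs : ∀ a ∈ s, ∀ b ∈ s, G.Adj a b → False) : False := by
  classical
  obtain ⟨t, hts, htcard⟩ := Finset.exists_subset_card_eq hcard
  have hst : ∀ a ∈ t, ∀ b ∈ t, G.Adj a b → False := fun a ha b hb =>
    hs a (hts ha) b (hts hb)
  have h1 : distNum (G.induce (↑t : Set V)) = d := htcard ▸ distNum_induce_indep t hst
  have h2 : (↑t : Set V) ≠ Set.univ := by
    intro h
    have hallmem : ∀ a : V, a ∈ t := by
      intro a
      have : a ∈ (↑t : Set V) := h ▸ Set.mem_univ a
      simpa using this
    have hall : ∀ a b, ¬ G.Adj a b := fun a b hab =>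
      hst a (hallmem a) b (hallmem b) hab
    obtain ⟨a, ha, b, hb, hab⟩ := Finset.one_lt_card.mp (by omega : 1 < t.card)
    obtain ⟨w⟩ := hconn a b
    cases w with
    | nil => exact hab rfl
    | cons h _ => exact hall _ _ h
  exact hcrit.2 _ h2 h1

lemma degree_le [Fintype V] {G : SimpleGraph V} [DecidableRel G.Adj] {d : ℕ} (hd : 2 ≤ d)
    (hconn : G.Connected) (hcrit : DistCritical G d) (htf : G.CliqueFree 3) (v : V) :
    G.degree v ≤ d - 1 := by
  classical
  by_contra h
  push_neg at h
  refine no_big_indep hd hconn hcrit (G.neighborFinset v)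
    (by rw [card_neighborFinset_eq_degree]; omega) ?_
  intro a ha b hb hab
  rw [mem_neighborFinset] at ha hb
  exact htf ({v, a, b} : Finset V) (SimpleGraph.is3Clique_triple_iff.mpr ⟨ha, hb, hab⟩)

lemma iso_degree [Fintype V] {G : SimpleGraph V} [DecidableRel G.Adj] (φ : G ≃g G) (v : V) :
    G.degree (φ v) = G.degree v := by
  rw [← card_neighborSet_eq_degree, ← card_neighborSet_eq_degree]
  exact Fintype.card_congr (φ.mapNeighborSet v).symm

lemma iso_dist {G : SimpleGraph V} (hconn : G.Connected) (φ : G ≃g G) (u v : V) :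
    G.dist (φ u) (φ v) = G.dist u v := by
  have h1 : ∀ (ψ : G ≃g G) (a b : V), G.dist (ψ a) (ψ b) ≤ G.dist a b := by
    intro ψ a b
    obtain ⟨w, hw⟩ := (hconn a b).exists_walk_length_eq_dist
    calc G.dist (ψ a) (ψ b) ≤ (w.map ψ.toHom).length := dist_le _
    _ = G.dist a b := by rw [SimpleGraph.Walk.length_map, hw]
  refine le_antisymm (h1 φ u v) ?_
  have := h1 φ.symm (φ u) (φ v)
  simpa using this

lemma exists_pred {G : SimpleGraph V} (hconn : G.Connected) {u v : V} (hne : v ≠ u) :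
    ∃ p, G.Adj p v ∧ G.dist u p + 1 = G.dist u v := by
  obtain ⟨w, hw⟩ := (hconn v u).exists_walk_length_eq_dist
  cases w with
  | nil => exact absurd rfl hne
  | @cons _ x _ h q =>
    refine ⟨x, h.symm, ?_⟩
    have h1 : G.dist u x ≤ q.length := by
      rw [SimpleGraph.dist_comm]; exact dist_le q
    have hxv : G.dist x v ≤ 1 := dist_le (SimpleGraph.Walk.cons h.symm SimpleGraph.Walk.nil)
    have h2 : G.dist u v ≤ G.dist u x + 1 := by
      have := hconn.dist_triangle (u := u) (v := x) (w := v)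
      omega
    have h3 : q.length + 1 = G.dist u v := by
      rw [SimpleGraph.dist_comm]
      simpa using hw
    omega

lemma rigid [Fintype V] {G : SimpleGraph V} (hconn : G.Connected) {k : ℕ} (f : V → Fin k) (u : V)
    (hu : ∀ φ : G ≃g G, (∀ v, f (φ v) = f v) → φ u = u)
    (hinj : ∀ w w', G.dist u w = G.dist u w' → f w = f w' →
      (∀ p, G.dist u p < G.dist u w → (G.Adj p w ↔ G.Adj p w')) → w = w') :
    IsDistinguishing G k f := by
  intro φ hφ
  have hufix := hu φ hφ
  have hdist : ∀ v, G.dist u (φ v) = G.dist u v := by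
    intro v
    conv_lhs => rw [← hufix]
    exact iso_dist hconn φ u v
  have main : ∀ n v, G.dist u v = n → φ v = v := by
    intro n
    induction n using Nat.strong_induction_on with
    | _ n ih =>
      intro v hv
      refine hinj (φ v) v (by rw [hdist, hv]) (hφ v) ?_
      intro p hp
      rw [hdist v, hv] at hp
      have hpfix : φ p = p := ih _ hp p rfl
      constructor
      · intro hadj
        rw [← hpfix] at hadj
        exact φ.map_adj_iff.mp hadj
      · intro hadj
        rw [← hpfix]
        exact φ.map_adj_iff.mpr hadj
  intro v
  exact main _ v rfl

lemma exists_labeling0 [Fintype V] {K : Type*} [DecidableEq K] (κ : V → K) {k : ℕ} (hk : 0 < k)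
    (C : K → Finset (Fin k))
    (hb : ∀ v : V, (univ.filter (fun w => κ w = κ v)).card ≤ (C (κ v)).card) :
    ∃ f : V → Fin k, (∀ v, f v ∈ C (κ v)) ∧ ∀ v w, κ v = κ w → f v = f w → v = w := by
  classical
  have key : ∀ a : K, ∃ g : V → Fin k, (∀ v, κ v = a → g v ∈ C a) ∧
      (∀ v w, κ v = a → κ w = a → g v = g w → v = w) := by
    intro a
    by_cases hS : (univ.filter (fun w => κ w = a)).Nonempty
    · obtain ⟨v₀, hv₀⟩ := hS
      rw [mem_filter] at hv₀
      have hle : (univ.filter (fun w => κ w = a)).card ≤ (C a).card := by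
        have := hb v₀
        rwa [hv₀.2] at this
      set S := univ.filter (fun w => κ w = a) with hSdef
      refine ⟨fun v => if h : v ∈ S then
        ((C a).equivFin.symm (Fin.castLE hle (S.equivFin ⟨v, h⟩))).1
        else ⟨0, hk⟩, ?_, ?_⟩
      · intro v hv
        have hvS : v ∈ S := by rw [hSdef, mem_filter]; exact ⟨mem_univ v, hv⟩
        dsimp only
        rw [dif_pos hvS]
        exact ((C a).equivFin.symm _).2
      · intro v w hv hw heq
        have hvS : v ∈ S := by rw [hSdef, mem_filter]; exact ⟨mem_univ v, hv⟩
        have hwS : w ∈ S := by rw [hSdef, mem_filter]; exact ⟨mem_univ w, hw⟩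
        dsimp only at heq
        rw [dif_pos hvS, dif_pos hwS] at heq
        have h1 := Subtype.ext heq
        have h2 := ((C a).equivFin.symm).injective h1
        have h3 := Fin.castLE_injective hle h2
        have h4 := (S.equivFin).injective h3
        exact Subtype.mk_eq_mk.mp h4
    · exact ⟨fun _ => ⟨0, hk⟩, fun v hv => absurd (mem_filter.mpr ⟨mem_univ v, hv⟩) (by
        intro h; exact hS ⟨v, h⟩), fun v w hv hw _ => absurd (mem_filter.mpr ⟨mem_univ v, hv⟩)
        (by intro h; exact hS ⟨v, h⟩)⟩
  choose g hg1 hg2 using key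
  refine ⟨fun v => g (κ v) v, fun v => hg1 (κ v) v rfl, fun v w h heq => ?_⟩
  dsimp only at heq
  rw [h] at heq
  exact hg2 (κ w) v w h rfl heq

lemma retarget {K : Type*} [DecidableEq K] (κ : V → K) {k : ℕ} (C : K → Finset (Fin k))
    (f : V → Fin k) (hmem : ∀ v, f v ∈ C (κ v)) (hinj : ∀ v w, κ v = κ w → f v = f w → v = w)
    (x : V) (c₀ : Fin k) (hc₀ : c₀ ∈ C (κ x)) :
    ∃ f' : V → Fin k, (∀ v, f' v ∈ C (κ v)) ∧ (∀ v w, κ v = κ w → f' v = f' w → v = w) ∧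
      f' x = c₀ ∧ ∀ v, κ v ≠ κ x → f' v = f v := by
  classical
  refine ⟨fun v => if κ v = κ x then Equiv.swap (f x) c₀ (f v) else f v, ?_, ?_, ?_, ?_⟩
  · intro v
    dsimp only
    by_cases h : κ v = κ x
    · rw [if_pos h]
      rcases eq_or_ne (f v) (f x) with he | hne1
      · rw [he, Equiv.swap_apply_left, h]; exact hc₀
      rcases eq_or_ne (f v) c₀ with he | hne2
      · rw [he, Equiv.swap_apply_right, h]; exact h ▸ hmem x
      · rw [Equiv.swap_apply_of_ne_of_ne hne1 hne2]; exact hmem v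
    · rw [if_neg h]; exact hmem v
  · intro v w hκ heq
    dsimp only at heq
    by_cases h : κ v = κ x
    · rw [if_pos h, if_pos (hκ ▸ h)] at heq
      exact hinj v w hκ ((Equiv.swap (f x) c₀).injective heq)
    · rw [if_neg h, if_neg (fun hh => h (hκ ▸ hh))] at heq
      exact hinj v w hκ heq
  · dsimp only
    rw [if_pos rfl, Equiv.swap_apply_left]
  · intro v hv
    dsimp only
    rw [if_neg hv]

/-- The BFS key of a vertex: distance from `u` together with the set of neighbors
one step closer to `u`. -/
noncomputable def kk [Fintype V] (G : SimpleGraph V) [DecidableRel G.Adj] (u v : V) : ℕ × Finset V :=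
  (G.dist u v, (G.neighborFinset v).filter (fun p => G.dist u p + 1 = G.dist u v))

lemma kk_u [Fintype V] {G : SimpleGraph V} [DecidableRel G.Adj] (u : V) :
    kk G u u = (0, ∅) := by
  unfold kk
  rw [SimpleGraph.dist_self]
  congr 1
  ext p
  simp

lemma dist_zero {G : SimpleGraph V} (hconn : G.Connected) {u v : V} (h : G.dist u v = 0) :
    v = u := (hconn.dist_eq_zero_iff.mp h).symm

lemma kk_of_dist_one [Fintype V] {G : SimpleGraph V} [DecidableRel G.Adj]
    (hconn : G.Connected) {u v : V} (h : G.dist u v = 1) : kk G u v = (1, {u}) := by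
  unfold kk
  rw [h]
  congr 1
  ext p
  simp only [mem_filter, mem_neighborFinset, mem_singleton]
  constructor
  · rintro ⟨hadj, hd⟩
    exact dist_zero hconn (by omega)
  · rintro rfl
    exact ⟨(SimpleGraph.dist_eq_one_iff_adj.mp h).symm, by rw [SimpleGraph.dist_self]⟩

lemma kk_adj [Fintype V] {G : SimpleGraph V} [DecidableRel G.Adj]
    (hconn : G.Connected) {u v : V} (h : G.Adj u v) : kk G u v = (1, {u}) :=
  kk_of_dist_one hconn (SimpleGraph.dist_eq_one_iff_adj.mpr h)

lemma impostor_nbr [Fintype V] {G : SimpleGraph V} {k : ℕ} (f : V → Fin k) (u v : V)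
    (φ : G ≃g G) (hφ : ∀ x, f (φ x) = f x) (huv : φ u = v)
    (hinjL1 : ∀ a b, G.Adj u a → G.Adj u b → f a = f b → a = b)
    (a b : V) (hab : a ≠ b) (ha : G.Adj v a) (hb : G.Adj v b) (hf : f a = f b) : False := by
  have hA : ∀ x, G.Adj v x → G.Adj u (φ.symm x) := by
    intro x hx
    rw [← φ.map_adj_iff, RelIso.apply_symm_apply, huv]
    exact hx
  have hfs : ∀ x, f (φ.symm x) = f x := by
    intro x
    conv_rhs => rw [← RelIso.apply_symm_apply φ x]
    exact (hφ (φ.symm x)).symm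
  have := hinjL1 (φ.symm a) (φ.symm b) (hA a ha) (hA b hb)
    (by rw [hfs, hfs]; exact hf)
  exact hab (φ.symm.injective.eq_iff.mp (this) ▸ rfl)

lemma scheme_core [Fintype V] {G : SimpleGraph V} [DecidableRel G.Adj] {d : ℕ}
    (hconn : G.Connected) (hcrit : DistCritical G d) (u : V) {k : ℕ} (hk : k < d)
    (f : V → Fin k)
    (hinj : ∀ v w, kk G u v = kk G u w → f v = f w → v = w)
    (hu : ∀ φ : G ≃g G, (∀ v, f (φ v) = f v) → φ u = u) : False := by
  refine not_isDist hcrit.1 hk f (rigid hconn f u hu ?_)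
  intro w w' hdist hf hadj
  rcases Nat.eq_zero_or_pos (G.dist u w) with h0 | hpos
  · have hw : w = u := dist_zero hconn h0
    have hw' : w' = u := dist_zero hconn (by omega)
    rw [hw, hw']
  refine hinj w w' ?_ hf
  unfold kk
  rw [hdist]
  congr 1
  ext p
  simp only [mem_filter, mem_neighborFinset]
  constructor
  · rintro ⟨hadjp, hd⟩
    exact ⟨((hadj p (by omega)).mp hadjp.symm).symm, by omega⟩
  · rintro ⟨hadjp, hd⟩
    exact ⟨((hadj p (by omega)).mpr hadjp.symm).symm, by omega⟩

lemma exists_maxdeg [Fintype V] [Nonempty V] {G : SimpleGraph V} [DecidableRel G.Adj] {d : ℕ}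
    (hd : 3 ≤ d) (hconn : G.Connected) (hcrit : DistCritical G d) (htf : G.CliqueFree 3) :
    ∃ u : V, G.degree u = d - 1 := by
  classical
  by_contra h
  push_neg at h
  have hdeg : ∀ v : V, G.degree v ≤ d - 2 := fun v => by
    have h1 := degree_le (by omega) hconn hcrit htf v
    have h2 := h v
    omega
  obtain ⟨u⟩ := ‹Nonempty V›
  have hc0 : 0 < d - 1 := by omega
  set c : Fin (d-1) := ⟨0, hc0⟩ with hc
  set C : ℕ × Finset V → Finset (Fin (d-1)) :=
    fun key => if key.1 = 0 then {c} else Finset.univ.erase c with hC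
  have hb : ∀ v : V, (univ.filter (fun w => kk G u w = kk G u v)).card ≤ (C (kk G u v)).card := by
    intro v
    by_cases hv : v = u
    · have h1 : univ.filter (fun w => kk G u w = kk G u v) = {v} := by
        ext w
        simp only [mem_filter, mem_univ, true_and, mem_singleton]
        constructor
        · intro hw
          have h2 : G.dist u w = 0 := by
            have h3 := congrArg Prod.fst hw
            rw [hv, kk_u] at h3
            exact h3
          rw [dist_zero hconn h2, hv]
        · rintro rfl; rfl
      rw [h1, hv, kk_u, hC]
      simp
    · obtain ⟨p, hpadj, hpd⟩ := exists_pred hconn hv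
      have hdvpos : G.dist u v ≠ 0 := fun h0 => hv (dist_zero hconn h0)
      have hsub : univ.filter (fun w => kk G u w = kk G u v) ⊆ G.neighborFinset p := by
        intro w hw
        rw [mem_filter] at hw
        have htr := congrArg Prod.snd hw.2
        unfold kk at htr
        simp only at htr
        have hp' : p ∈ (G.neighborFinset v).filter (fun q => G.dist u q + 1 = G.dist u v) := by
          rw [mem_filter, mem_neighborFinset]
          exact ⟨hpadj.symm, hpd⟩
        rw [← htr, mem_filter, mem_neighborFinset] at hp'
        rw [mem_neighborFinset]
        exact hp'.1.symm
      calc (univ.filter (fun w => kk G u w = kk G u v)).card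
          ≤ (G.neighborFinset p).card := card_le_card hsub
        _ ≤ d - 2 := by rw [card_neighborFinset_eq_degree]; exact hdeg p
        _ ≤ (C (kk G u v)).card := by
            have hCv : C (kk G u v) = Finset.univ.erase c := by
              rw [hC]
              exact if_neg hdvpos
            rw [hCv, card_erase_of_mem (mem_univ c), card_univ, Fintype.card_fin]
            omega
  obtain ⟨f, hfmem, hfinj⟩ := exists_labeling0 (kk G u) hc0 C hb
  refine scheme_core hconn hcrit u (show d - 1 < d by omega) f hfinj ?_
  intro φ hφ
  by_contra hne
  have h1 : f u = c := by
    have h1a := hfmem u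
    rw [kk_u, hC] at h1a
    simpa using h1a
  have h2 : f (φ u) = c := (hφ u).trans h1
  have h3 := hfmem (φ u)
  have h4 : G.dist u (φ u) ≠ 0 := fun h0 => hne (dist_zero hconn h0)
  have hCv : C (kk G u (φ u)) = Finset.univ.erase c := by
    rw [hC]
    exact if_neg h4
  rw [hCv, h2] at h3
  exact (Finset.notMem_erase c _) h3

lemma nbr_indep {G : SimpleGraph V} (htf : G.CliqueFree 3) {u x y : V}
    (hx : G.Adj u x) (hy : G.Adj u y) : ¬ G.Adj x y := by
  classical
  exact fun hxy => htf ({u, x, y} : Finset V) (SimpleGraph.is3Clique_triple_iff.mpr ⟨hx, hy, hxy⟩)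

lemma dist_le_two [Fintype V] [DecidableEq V] {G : SimpleGraph V} [DecidableRel G.Adj] {d : ℕ} {u : V}
    (hd : 2 ≤ d) (hconn : G.Connected) (hcrit : DistCritical G d) (htf : G.CliqueFree 3)
    (hu : G.degree u = d - 1) (v : V) : G.dist u v ≤ 2 := by
  classical
  by_contra hgt
  push_neg at hgt
  have hvu : v ≠ u := by
    intro e
    rw [e, SimpleGraph.dist_self] at hgt
    omega
  have hnadj : ¬ G.Adj u v := by
    intro e
    rw [SimpleGraph.dist_eq_one_iff_adj.mpr e] at hgt
    omega
  have hvnotin : v ∉ G.neighborFinset u := by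
    rw [mem_neighborFinset]; exact hnadj
  refine no_big_indep hd hconn hcrit (insert v (G.neighborFinset u)) ?_ ?_
  · rw [card_insert_of_notMem hvnotin, card_neighborFinset_eq_degree, hu]
    omega
  · intro a ha b hb hab
    rw [mem_insert, mem_neighborFinset] at ha hb
    rcases ha with rfl | ha
    · rcases hb with rfl | hb
      · exact G.loopless.irrefl _ hab
      · -- Adj a b with Adj u b : common neighbor gives dist ≤ 2
        have : G.dist u a ≤ 2 := by
          have t := hconn.dist_triangle (u := u) (v := b) (w := a)
          have h1 : G.dist u b = 1 := SimpleGraph.dist_eq_one_iff_adj.mpr hb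
          have h2 : G.dist b a ≤ 1 := dist_le (SimpleGraph.Walk.cons hab.symm SimpleGraph.Walk.nil)
          omega
        omega
    · rcases hb with rfl | hb
      · have : G.dist u b ≤ 2 := by
          have t := hconn.dist_triangle (u := u) (v := a) (w := b)
          have h1 : G.dist u a = 1 := SimpleGraph.dist_eq_one_iff_adj.mpr ha
          have h2 : G.dist a b ≤ 1 := dist_le (SimpleGraph.Walk.cons hab SimpleGraph.Walk.nil)
          omega
        omega
      · exact nbr_indep htf ha hb hab

lemma kk_of_dist_two [Fintype V] {G : SimpleGraph V} [DecidableRel G.Adj]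
    (hconn : G.Connected) {u w : V} (h2 : G.dist u w = 2) :
    kk G u w = (2, (G.neighborFinset w).filter (fun p => G.Adj u p)) := by
  unfold kk
  rw [h2]
  congr 1
  ext p
  simp only [mem_filter, mem_neighborFinset, and_congr_right_iff]
  intro _
  constructor
  · intro hp
    exact SimpleGraph.dist_eq_one_iff_adj.mp (by omega)
  · intro hp
    rw [SimpleGraph.dist_eq_one_iff_adj.mpr hp]

lemma fiber_zero [Fintype V] [DecidableEq V] {G : SimpleGraph V} [DecidableRel G.Adj]
    (hconn : G.Connected) (u : V) :
    univ.filter (fun w => kk G u w = kk G u u) = {u} := by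
  classical
  ext w
  simp only [mem_filter, mem_univ, true_and, mem_singleton]
  constructor
  · intro hw
    have h3 := congrArg Prod.fst hw
    rw [kk_u] at h3
    exact dist_zero hconn h3
  · rintro rfl; rfl

lemma fiber_one [Fintype V] [DecidableEq V] {G : SimpleGraph V} [DecidableRel G.Adj]
    (hconn : G.Connected) {u x : V} (hx : G.Adj u x) :
    univ.filter (fun w => kk G u w = kk G u x) = G.neighborFinset u := by
  classical
  rw [kk_adj hconn hx]
  ext w
  simp only [mem_filter, mem_univ, true_and, mem_neighborFinset]
  constructor
  · intro hw
    have h3 : G.dist u w = 1 := congrArg Prod.fst hw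
    exact SimpleGraph.dist_eq_one_iff_adj.mp h3
  · intro hw
    exact kk_adj hconn hw

lemma fiber_two_card [Fintype V] [DecidableEq V] {G : SimpleGraph V} [DecidableRel G.Adj] {d : ℕ} {u : V}
    (hd : 2 ≤ d) (hconn : G.Connected) (hcrit : DistCritical G d) (htf : G.CliqueFree 3)
    {w : V} (h2 : G.dist u w = 2) :
    (univ.filter (fun w' => kk G u w' = kk G u w)).card ≤ d - 2 := by
  classical
  have hwu : w ≠ u := by
    intro e; rw [e, SimpleGraph.dist_self] at h2; omega
  obtain ⟨p, hpadj, hpd⟩ := exists_pred hconn hwu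
  rw [h2] at hpd
  have hup : G.Adj u p := SimpleGraph.dist_eq_one_iff_adj.mp (by omega)
  set F := univ.filter (fun w' => kk G u w' = kk G u w) with hF
  have hFp : ∀ w' ∈ F, G.Adj p w' := by
    intro w' hw'
    rw [hF, mem_filter] at hw'
    have htr := congrArg Prod.snd hw'.2
    unfold kk at htr
    simp only at htr
    have hp' : p ∈ (G.neighborFinset w).filter (fun q => G.dist u q + 1 = G.dist u w) := by
      rw [mem_filter, mem_neighborFinset]
      exact ⟨hpadj.symm, by omega⟩
    rw [← htr, mem_filter, mem_neighborFinset] at hp'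
    exact hp'.1.symm
  have hFd : ∀ w' ∈ F, G.dist u w' = 2 := by
    intro w' hw'
    rw [hF, mem_filter] at hw'
    have := congrArg Prod.fst hw'.2
    unfold kk at this
    simp only at this
    omega
  have huF : u ∉ F := by
    intro hc
    have := hFd u hc
    rw [SimpleGraph.dist_self] at this
    omega
  by_contra hcard
  push_neg at hcard
  refine no_big_indep hd hconn hcrit (insert u F) ?_ ?_
  · rw [card_insert_of_notMem huF]
    omega
  · intro a ha b hb hab
    rw [mem_insert] at ha hb
    rcases ha with rfl | ha
    · rcases hb with rfl | hb
      · exact G.loopless.irrefl _ hab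
      · have := hFd b hb
        rw [SimpleGraph.dist_eq_one_iff_adj.mpr hab] at this
        omega
    · rcases hb with rfl | hb
      · have := hFd a ha
        rw [SimpleGraph.dist_eq_one_iff_adj.mpr hab.symm] at this
        omega
      · exact nbr_indep htf (hFp a ha) (hFp b hb) hab

lemma hb_std [Fintype V] [DecidableEq V] {G : SimpleGraph V} [DecidableRel G.Adj] {d : ℕ} {u : V}
    (hd : 3 ≤ d) (hconn : G.Connected) (hcrit : DistCritical G d) (htf : G.CliqueFree 3)
    (hu : G.degree u = d - 1) (C : ℕ × Finset V → Finset (Fin (d-1)))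
    (h0 : ∀ key : ℕ × Finset V, key.1 = 0 → (C key).card = 1)
    (h1 : ∀ key : ℕ × Finset V, key.1 = 1 → (C key).card = d - 1)
    (h2 : ∀ key : ℕ × Finset V, key.1 = 2 → d - 2 ≤ (C key).card) :
    ∀ v : V, (univ.filter (fun w => kk G u w = kk G u v)).card ≤ (C (kk G u v)).card := by
  classical
  intro v
  have hle2 : G.dist u v ≤ 2 := dist_le_two (by omega) hconn hcrit htf hu v
  interval_cases hdv : G.dist u v
  · have hvu : v = u := dist_zero hconn hdv
    rw [hvu, fiber_zero hconn u, h0 _ (by rw [kk_u])]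
    simp
  · have hadj : G.Adj u v := SimpleGraph.dist_eq_one_iff_adj.mp hdv
    rw [fiber_one hconn hadj, h1 _ (by rw [kk_adj hconn hadj]), card_neighborFinset_eq_degree, hu]
  · have := fiber_two_card (by omega) hconn hcrit htf hdv
    have := h2 (kk G u v) (by unfold kk; rw [hdv])
    omega

lemma dist_two_of_mem_Mx [Fintype V] [DecidableEq V] {G : SimpleGraph V} [DecidableRel G.Adj]
    (hconn : G.Connected) (htf : G.CliqueFree 3) {u x w : V}
    (hx : G.Adj u x) (hw : w ∈ (G.neighborFinset x).erase u) : G.dist u w = 2 := by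
  rw [mem_erase, mem_neighborFinset] at hw
  obtain ⟨hwu, hxw⟩ := hw
  have hnadj : ¬ G.Adj u w := fun h => nbr_indep htf hx h hxw
  have hne : G.dist u w ≠ 1 := fun h => hnadj (SimpleGraph.dist_eq_one_iff_adj.mp h)
  have hne0 : G.dist u w ≠ 0 := fun h => hwu (dist_zero hconn h)
  have hle : G.dist u w ≤ 2 := by
    have t := hconn.dist_triangle (u := u) (v := x) (w := w)
    have e1 : G.dist u x = 1 := SimpleGraph.dist_eq_one_iff_adj.mpr hx
    have e2 : G.dist x w ≤ 1 := dist_le (SimpleGraph.Walk.cons hxw SimpleGraph.Walk.nil)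
    omega
  omega

lemma S1 [Fintype V] [DecidableEq V] {G : SimpleGraph V} [DecidableRel G.Adj] {d : ℕ} {u : V}
    (hd : 3 ≤ d) (hconn : G.Connected) (hcrit : DistCritical G d) (htf : G.CliqueFree 3)
    (hu : G.degree u = d - 1) {x₀ : V} (hx₀ : G.Adj u x₀) : G.degree x₀ = d - 1 := by
  classical
  have hle := degree_le (by omega) hconn hcrit htf x₀
  by_contra hne
  have hdegx : G.degree x₀ ≤ d - 2 := by omega
  have hc0 : 0 < d - 1 := by omega
  set c : Fin (d-1) := ⟨0, hc0⟩ with hc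
  set C : ℕ × Finset V → Finset (Fin (d-1)) :=
    fun key => if key.1 = 0 then {c} else if key.1 = 1 then Finset.univ
      else Finset.univ.erase c with hC
  have hb := hb_std hd hconn hcrit htf hu C
    (fun key hk => by rw [hC]; simp [hk])
    (fun key hk => by rw [hC]; simp [hk, card_univ])
    (fun key hk => by
      have hck : C key = Finset.univ.erase c := by rw [hC]; simp [hk]
      rw [hck, card_erase_of_mem (mem_univ c), card_univ, Fintype.card_fin]
      omega)
  obtain ⟨f₀, hf₀mem, hf₀inj⟩ := exists_labeling0 (kk G u) hc0 C hb
  obtain ⟨f, hfmem, hfinj, hfx₀, hfoth⟩ := retarget (kk G u) C f₀ hf₀mem hf₀inj x₀ c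
    (by rw [kk_adj hconn hx₀, hC]; simp)
  refine scheme_core hconn hcrit u (show d - 1 < d by omega) f hfinj ?_
  intro φ hφ
  by_contra hneq
  have hfu : f u = c := by
    have h1a := hfmem u
    rw [kk_u, hC] at h1a
    simpa using h1a
  have hfφu : f (φ u) = c := (hφ u).trans hfu
  have hdle : G.dist u (φ u) ≤ 2 := dist_le_two (by omega) hconn hcrit htf hu (φ u)
  have hd0 : G.dist u (φ u) ≠ 0 := fun h => hneq (dist_zero hconn h)
  interval_cases hdv : G.dist u (φ u)
  · exact absurd rfl hd0
  · -- φ u is in the L1 class, equal to x₀ by injectivity, contradiction by degree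
    have hkeq : kk G u (φ u) = kk G u x₀ := by
      rw [kk_of_dist_one hconn hdv, kk_adj hconn hx₀]
    have : φ u = x₀ := hfinj _ _ hkeq (by rw [hfφu, hfx₀])
    have hdeg := iso_degree φ u
    rw [this, hu] at hdeg
    omega
  · have h3 := hfmem (φ u)
    have hCv : C (kk G u (φ u)) = Finset.univ.erase c := by
      rw [hC]
      have e1 : (kk G u (φ u)).1 = 2 := hdv
      simp [e1]
    rw [hCv, hfφu] at h3
    exact (Finset.notMem_erase c _) h3

lemma kk_ne_of_dist_ne [Fintype V] {G : SimpleGraph V} [DecidableRel G.Adj] {u a b : V}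
    (h : G.dist u a ≠ G.dist u b) : kk G u a ≠ kk G u b :=
  fun e => h (congrArg Prod.fst e)

lemma S2 [Fintype V] [DecidableEq V] {G : SimpleGraph V} [DecidableRel G.Adj] {d : ℕ} {u : V}
    (hd : 3 ≤ d) (hconn : G.Connected) (hcrit : DistCritical G d) (htf : G.CliqueFree 3)
    (hu : G.degree u = d - 1) {x₀ : V} (hx₀ : G.Adj u x₀)
    {w w' : V} (hw : w ∈ (G.neighborFinset x₀).erase u) (hw' : w' ∈ (G.neighborFinset x₀).erase u)
    (hne : kk G u w ≠ kk G u w') : False := by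
  classical
  have hdw : G.dist u w = 2 := dist_two_of_mem_Mx hconn htf hx₀ hw
  have hdw' : G.dist u w' = 2 := dist_two_of_mem_Mx hconn htf hx₀ hw'
  have hwne : w ≠ w' := fun e => hne (e ▸ rfl)
  have hc0 : 0 < d - 1 := by omega
  set c : Fin (d-1) := ⟨0, hc0⟩ with hc
  set C : ℕ × Finset V → Finset (Fin (d-1)) :=
    fun key => if key.1 = 0 then {c} else if key.1 = 1 then Finset.univ
      else Finset.univ.erase c with hC
  have hb := hb_std hd hconn hcrit htf hu C
    (fun key hk => by rw [hC]; simp [hk])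
    (fun key hk => by rw [hC]; simp [hk, card_univ])
    (fun key hk => by
      have hck : C key = Finset.univ.erase c := by rw [hC]; simp [hk]
      rw [hck, card_erase_of_mem (mem_univ c), card_univ, Fintype.card_fin]
      omega)
  obtain ⟨f₀, hf₀mem, hf₀inj⟩ := exists_labeling0 (kk G u) hc0 C hb
  obtain ⟨f₁, hf₁mem, hf₁inj, hf₁x₀, hf₁oth⟩ := retarget (kk G u) C f₀ hf₀mem hf₀inj x₀ c
    (by rw [kk_adj hconn hx₀, hC]; simp)
  have hCw : C (kk G u w) = Finset.univ.erase c := by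
    rw [hC]
    have e1 : (kk G u w).1 = 2 := hdw
    simp [e1]
  have hCw' : C (kk G u w') = Finset.univ.erase c := by
    rw [hC]
    have e1 : (kk G u w').1 = 2 := hdw'
    simp [e1]
  obtain ⟨f, hfmem, hfinj, hfw', hfoth⟩ := retarget (kk G u) C f₁ hf₁mem hf₁inj w' (f₁ w)
    (by rw [hCw']; have hm := hf₁mem w; rw [hCw] at hm; exact hm)
  have hfx₀ : f x₀ = c := by
    rw [hfoth x₀ (kk_ne_of_dist_ne (by
      rw [SimpleGraph.dist_eq_one_iff_adj.mpr hx₀, hdw']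
      omega))]
    exact hf₁x₀
  have hfw : f w = f₁ w := hfoth w hne
  have hfww' : f w = f w' := by rw [hfw, hfw']
  refine scheme_core hconn hcrit u (show d - 1 < d by omega) f hfinj ?_
  intro φ hφ
  by_contra hneq
  have hfu : f u = c := by
    have h1a := hfmem u
    rw [kk_u, hC] at h1a
    simpa using h1a
  have hfφu : f (φ u) = c := (hφ u).trans hfu
  have hdle : G.dist u (φ u) ≤ 2 := dist_le_two (by omega) hconn hcrit htf hu (φ u)
  have hd0 : G.dist u (φ u) ≠ 0 := fun h => hneq (dist_zero hconn h)
  interval_cases hdv : G.dist u (φ u)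
  · exact absurd rfl hd0
  · have hkeq : kk G u (φ u) = kk G u x₀ := by
      rw [kk_of_dist_one hconn hdv, kk_adj hconn hx₀]
    have hiso : φ u = x₀ := hfinj _ _ hkeq (by rw [hfφu, hfx₀])
    refine impostor_nbr f u x₀ φ hφ hiso
      (fun a b ha hb hf => hfinj a b (by rw [kk_adj hconn ha, kk_adj hconn hb]) hf)
      w w' hwne ?_ ?_ hfww'
    · rw [mem_erase, mem_neighborFinset] at hw
      exact hw.2
    · rw [mem_erase, mem_neighborFinset] at hw'
      exact hw'.2
  · have h3 := hfmem (φ u)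
    have hCv : C (kk G u (φ u)) = Finset.univ.erase c := by
      rw [hC]
      have e1 : (kk G u (φ u)).1 = 2 := hdv
      simp [e1]
    rw [hCv, hfφu] at h3
    exact (Finset.notMem_erase c _) h3

lemma S3 [Fintype V] [DecidableEq V] {G : SimpleGraph V} [DecidableRel G.Adj] {d : ℕ} {u : V}
    (hd : 3 ≤ d) (hconn : G.Connected) (hcrit : DistCritical G d) (htf : G.CliqueFree 3)
    (hu : G.degree u = d - 1) {x₀ x' : V} (hx₀ : G.Adj u x₀) (hx' : G.Adj u x') (hxx : x' ≠ x₀)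
    {wst : V} (hwst : wst ∈ (G.neighborFinset x₀).erase u) (hadjx' : G.Adj x' wst)
    {y : V} (hy : G.Adj u y) (hymiss : ¬ G.Adj y wst) : False := by
  classical
  have hdwst : G.dist u wst = 2 := dist_two_of_mem_Mx hconn htf hx₀ hwst
  have hadjx₀wst : G.Adj x₀ wst := by
    rw [mem_erase, mem_neighborFinset] at hwst
    exact hwst.2
  have hc0 : 0 < d - 1 := by omega
  set c : Fin (d-1) := ⟨0, hc0⟩ with hc
  set C : ℕ × Finset V → Finset (Fin (d-1)) :=
    fun key => if key.1 = 0 then {c} else if key.1 = 1 then Finset.univ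
      else if key = kk G u wst then Finset.univ else Finset.univ.erase c with hC
  have hCval : ∀ key : ℕ × Finset V, key.1 = 2 → key ≠ kk G u wst →
      C key = Finset.univ.erase c := by
    intro key hk hne
    rw [hC]
    simp [hk, hne]
  have hCwst : C (kk G u wst) = Finset.univ := by
    rw [hC]
    have e1 : (kk G u wst).1 = 2 := hdwst
    simp [e1]
  have hb := hb_std hd hconn hcrit htf hu C
    (fun key hk => by rw [hC]; simp [hk])
    (fun key hk => by rw [hC]; simp [hk, card_univ])
    (fun key hk => by
      by_cases hne : key = kk G u wst
      · rw [hne, hCwst, card_univ, Fintype.card_fin]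
        omega
      · rw [hCval key hk hne, card_erase_of_mem (mem_univ c), card_univ, Fintype.card_fin]
        omega)
  obtain ⟨f₀, hf₀mem, hf₀inj⟩ := exists_labeling0 (kk G u) hc0 C hb
  obtain ⟨f₁, hf₁mem, hf₁inj, hf₁x₀, hf₁oth⟩ := retarget (kk G u) C f₀ hf₀mem hf₀inj x₀ c
    (by rw [kk_adj hconn hx₀, hC]; simp)
  obtain ⟨f₂, hf₂mem, hf₂inj, hf₂wst, hf₂oth⟩ := retarget (kk G u) C f₁ hf₁mem hf₁inj wst c
    (by rw [hCwst]; exact mem_univ c)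
  have hkkx₀wst : kk G u x₀ ≠ kk G u wst := kk_ne_of_dist_ne (by
    rw [SimpleGraph.dist_eq_one_iff_adj.mpr hx₀, hdwst]
    omega)
  have hf₂x₀ : f₂ x₀ = c := by rw [hf₂oth x₀ hkkx₀wst]; exact hf₁x₀
  have hinjL1 : ∀ (g : V → Fin (d-1)), (∀ v w, kk G u v = kk G u w → g v = g w → v = w) →
      ∀ a b, G.Adj u a → G.Adj u b → g a = g b → a = b := fun g hg a b ha hb hf =>
    hg a b (by rw [kk_adj hconn ha, kk_adj hconn hb]) hf
  -- common final step, parameterized by the labeling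
  have final : ∀ g : V → Fin (d-1), (∀ v, g v ∈ C (kk G u v)) →
      (∀ v w, kk G u v = kk G u w → g v = g w → v = w) → g x₀ = c → g wst = c →
      (∀ φ : G ≃g G, (∀ x, g (φ x) = g x) → φ u = wst → False) → False := by
    intro g hgmem hginj hgx₀ hgwst hkill
    refine scheme_core hconn hcrit u (show d - 1 < d by omega) g hginj ?_
    intro φ hφ
    by_contra hneq
    have hgu : g u = c := by
      have h1a := hgmem u
      rw [kk_u, hC] at h1a
      simpa using h1a
    have hgφu : g (φ u) = c := (hφ u).trans hgu
    have hdle : G.dist u (φ u) ≤ 2 := dist_le_two (by omega) hconn hcrit htf hu (φ u)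
    have hd0 : G.dist u (φ u) ≠ 0 := fun h => hneq (dist_zero hconn h)
    interval_cases hdv : G.dist u (φ u)
    · exact absurd rfl hd0
    · have hkeq : kk G u (φ u) = kk G u x₀ := by
        rw [kk_of_dist_one hconn hdv, kk_adj hconn hx₀]
      have hiso : φ u = x₀ := hginj _ _ hkeq (by rw [hgφu, hgx₀])
      refine impostor_nbr g u x₀ φ hφ hiso (hinjL1 g hginj) u wst ?_ hx₀.symm hadjx₀wst
        (by rw [hgu, hgwst])
      intro e
      rw [← e, SimpleGraph.dist_self] at hdwst
      omega
    · by_cases hkeq : kk G u (φ u) = kk G u wst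
      · exact hkill φ hφ (hginj _ _ hkeq (by rw [hgφu, hgwst]))
      · have h3 := hgmem (φ u)
        rw [hCval (kk G u (φ u)) hdv hkeq, hgφu] at h3
        exact (Finset.notMem_erase c _) h3
  by_cases hdegwst : G.degree wst = d - 1
  · -- wst has full degree: find an L2-neighbor w' of wst
    have hsub : ¬ (G.neighborFinset wst ⊆ G.neighborFinset u) := by
      intro hsub
      have hysub : G.neighborFinset wst ⊆ (G.neighborFinset u).erase y := by
        intro z hz
        rw [mem_erase]
        refine ⟨?_, hsub hz⟩
        rintro rfl
        rw [mem_neighborFinset] at hz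
        exact hymiss hz.symm
      have hcard := card_le_card hysub
      rw [card_neighborFinset_eq_degree, hdegwst,
        card_erase_of_mem (by rw [mem_neighborFinset]; exact hy),
        card_neighborFinset_eq_degree, hu] at hcard
      omega
    obtain ⟨w', hw'mem, hw'notL1⟩ := Finset.not_subset.mp hsub
    rw [mem_neighborFinset] at hw'mem
    rw [mem_neighborFinset] at hw'notL1
    have hw'u : w' ≠ u := by
      rintro rfl
      rw [SimpleGraph.dist_eq_one_iff_adj.mpr hw'mem.symm] at hdwst
      omega
    have hdw' : G.dist u w' = 2 := by
      have hle := dist_le_two (show 2 ≤ d by omega) hconn hcrit htf hu w'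
      have h0 : G.dist u w' ≠ 0 := fun h => hw'u (dist_zero hconn h)
      have h1 : G.dist u w' ≠ 1 := fun h => hw'notL1 (SimpleGraph.dist_eq_one_iff_adj.mp h)
      omega
    have hkkw' : kk G u w' ≠ kk G u wst := by
      intro e
      have htr := congrArg Prod.snd e
      rw [kk_of_dist_two hconn hdw', kk_of_dist_two hconn hdwst] at htr
      simp only at htr
      have hx₀wst : x₀ ∈ (G.neighborFinset wst).filter (fun p => G.Adj u p) := by
        rw [mem_filter, mem_neighborFinset]
        exact ⟨hadjx₀wst.symm, hx₀⟩
      rw [← htr, mem_filter, mem_neighborFinset] at hx₀wst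
      exact nbr_indep htf hadjx₀wst hx₀wst.1.symm hw'mem
    have hf₂x' : f₂ x' ≠ c := by
      intro e
      exact hxx (hf₂inj x' x₀ (by rw [kk_adj hconn hx', kk_adj hconn hx₀]) (by rw [e, hf₂x₀]))
    obtain ⟨f₃, hf₃mem, hf₃inj, hf₃w', hf₃oth⟩ := retarget (kk G u) C f₂ hf₂mem hf₂inj w' (f₂ x')
      (by rw [hCval (kk G u w') hdw' hkkw']; exact mem_erase.mpr ⟨hf₂x', mem_univ _⟩)
    have hkkx'w' : kk G u x' ≠ kk G u w' := kk_ne_of_dist_ne (by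
      rw [SimpleGraph.dist_eq_one_iff_adj.mpr hx', hdw']
      omega)
    have hf₃x' : f₃ x' = f₂ x' := hf₃oth x' hkkx'w'
    have hf₃x₀ : f₃ x₀ = c := by
      rw [hf₃oth x₀ (kk_ne_of_dist_ne (by
        rw [SimpleGraph.dist_eq_one_iff_adj.mpr hx₀, hdw']
        omega))]
      exact hf₂x₀
    have hf₃wst : f₃ wst = c := by
      rw [hf₃oth wst (fun e => hkkw' e.symm)]
      exact hf₂wst
    refine final f₃ hf₃mem hf₃inj hf₃x₀ hf₃wst ?_
    intro φ hφ hiso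
    refine impostor_nbr f₃ u wst φ hφ hiso (hinjL1 f₃ hf₃inj) x' w' ?_
      hadjx'.symm hw'mem (by rw [hf₃x', hf₃w'])
    intro e
    have h1 : G.dist u x' = 1 := SimpleGraph.dist_eq_one_iff_adj.mpr hx'
    rw [e, hdw'] at h1
    omega
  · -- wst has small degree: kill the impostor by a degree count
    have hdegsmall : G.degree wst ≤ d - 2 := by
      have := degree_le (by omega) hconn hcrit htf wst
      omega
    refine final f₂ hf₂mem hf₂inj hf₂x₀ hf₂wst ?_
    intro φ hφ hiso
    have hdeg := iso_degree φ u
    rw [hiso, hu] at hdeg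
    omega

lemma iso_bipartite [Fintype V] [DecidableEq V] {G : SimpleGraph V} (s : Finset V) {m : ℕ}
    (hcards : s.card = m) (hcardc : sᶜ.card = m)
    (hadj : ∀ v w : V, G.Adj v w ↔ ((v ∈ s ∧ w ∉ s) ∨ (v ∉ s ∧ w ∈ s))) :
    Nonempty (G ≃g completeBipartiteGraph (Fin m) (Fin m)) := by
  classical
  have hc1 : Fintype.card (↑s : Set V) = m := by
    simpa using hcards
  have hc2 : Fintype.card ((↑s : Set V)ᶜ : Set V) = m := by
    rw [Fintype.card_subtype]
    have h3 : (univ.filter (fun x => x ∈ ((↑s : Set V)ᶜ))) = sᶜ := by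
      ext x
      simp
    rw [h3, hcardc]
  set e1 : (↑s : Set V) ≃ Fin m := Fintype.equivFinOfCardEq hc1 with he1
  set e2 : ((↑s : Set V)ᶜ : Set V) ≃ Fin m := Fintype.equivFinOfCardEq hc2 with he2
  set E : V ≃ (Fin m) ⊕ (Fin m) :=
    (Equiv.Set.sumCompl (↑s : Set V)).symm.trans (Equiv.sumCongr e1 e2) with hE
  have keyL : ∀ v : V, ((E v).isLeft : Prop) ↔ v ∈ s := by
    intro v
    by_cases hv : v ∈ s
    · have h1 : (Equiv.Set.sumCompl (↑s : Set V)).symm v = Sum.inl ⟨v, by simpa using hv⟩ :=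
        Equiv.Set.sumCompl_symm_apply_of_mem (by simpa using hv)
      have h2 : E v = Sum.inl (e1 ⟨v, by simpa using hv⟩) := by
        rw [hE, Equiv.trans_apply, h1]
        rfl
      rw [h2]
      simpa using hv
    · have h1 : (Equiv.Set.sumCompl (↑s : Set V)).symm v = Sum.inr ⟨v, by simpa using hv⟩ :=
        Equiv.Set.sumCompl_symm_apply_of_notMem (by simpa using hv)
      have h2 : E v = Sum.inr (e2 ⟨v, by simpa using hv⟩) := by
        rw [hE, Equiv.trans_apply, h1]
        rfl
      rw [h2]
      simpa using hv
  have keyR : ∀ v : V, ((E v).isRight : Prop) ↔ v ∉ s := by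
    intro v
    constructor
    · intro h1 hv
      have h2 := (keyL v).mpr hv
      rcases hsum : E v with aa | bb
      · rw [hsum] at h1; simp at h1
      · rw [hsum] at h2; simp at h2
    · intro hv
      rcases hsum : E v with aa | bb
      · exfalso
        exact hv ((keyL v).mp (by rw [hsum]; simp))
      · simp
  refine ⟨⟨E, ?_⟩⟩
  intro a b
  show (completeBipartiteGraph (Fin m) (Fin m)).Adj (E a) (E b) ↔ G.Adj a b
  rw [hadj]
  show ((E a).isLeft ∧ (E b).isRight ∨ (E a).isRight ∧ (E b).isLeft) ↔ _
  constructor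
  · rintro (⟨h1, h2⟩ | ⟨h1, h2⟩)
    · exact Or.inl ⟨(keyL a).mp h1, (keyR b).mp h2⟩
    · exact Or.inr ⟨(keyR a).mp h1, (keyL b).mp h2⟩
  · rintro (⟨h1, h2⟩ | ⟨h1, h2⟩)
    · exact Or.inl ⟨(keyL a).mpr h1, (keyR b).mpr h2⟩
    · exact Or.inr ⟨(keyR a).mpr h1, (keyL b).mpr h2⟩

lemma iso_K2 {G : SimpleGraph V} (u v : V) (huv : G.Adj u v)
    (hV : ∀ w, w = u ∨ w = v) : Nonempty (G ≃g (⊤ : SimpleGraph (Fin 2))) := by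
  classical
  have hne : u ≠ v := G.ne_of_adj huv
  set f : V → Fin 2 := fun w => if w = u then 0 else 1 with hfdef
  set g : Fin 2 → V := ![u, v] with hgdef
  have hfu : f u = 0 := by rw [hfdef]; simp
  have hfv : f v = 1 := by rw [hfdef]; simp [hne.symm]
  have hli : Function.LeftInverse g f := by
    intro w
    rcases hV w with rfl | rfl
    · rw [hfu, hgdef]; rfl
    · rw [hfv, hgdef]; rfl
  have hri : Function.RightInverse g f := by
    intro i
    rcases i with ⟨iv, hiv⟩
    interval_cases iv
    · exact hfu
    · exact hfv
  refine ⟨⟨⟨f, g, hli, hri⟩, ?_⟩⟩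
  intro aa bb
  show (⊤ : SimpleGraph (Fin 2)).Adj (f aa) (f bb) ↔ G.Adj aa bb
  rw [SimpleGraph.top_adj]
  rcases hV aa with rfl | rfl <;> rcases hV bb with rfl | rfl
  · rw [hfu]; exact iff_of_false (by simp) (G.loopless.irrefl _)
  · rw [hfu, hfv]; exact iff_of_true (by decide) huv
  · rw [hfv, hfu]; exact iff_of_true (by decide) huv.symm
  · rw [hfv]; exact iff_of_false (by simp) (G.loopless.irrefl _)

lemma iso_C5 {G : SimpleGraph V} (u x₁ x₂ a b : V)
    (hV : ∀ v, v = u ∨ v = x₁ ∨ v = x₂ ∨ v = a ∨ v = b)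
    (e1 : G.Adj u x₁) (e2 : G.Adj u x₂) (e3 : G.Adj x₁ a) (e4 : G.Adj x₂ b) (e5 : G.Adj a b)
    (n1 : ¬ G.Adj x₁ x₂) (n2 : ¬ G.Adj u a) (n3 : ¬ G.Adj u b)
    (n4 : ¬ G.Adj x₁ b) (n5 : ¬ G.Adj x₂ a) :
    Nonempty (G ≃g SimpleGraph.cycleGraph 5) := by
  classical
  have d1 : u ≠ x₁ := G.ne_of_adj e1
  have d2 : u ≠ x₂ := G.ne_of_adj e2
  have d3 : u ≠ a := fun h => n3 (h ▸ e5)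
  have d4 : u ≠ b := fun h => n2 (G.symm.symm _ _ (h ▸ e5))
  have d5 : x₁ ≠ x₂ := fun h => n4 (h ▸ e4)
  have d6 : x₁ ≠ a := G.ne_of_adj e3
  have d7 : x₁ ≠ b := fun h => n3 (h ▸ e1)
  have d8 : x₂ ≠ a := fun h => n2 (h ▸ e2)
  have d9 : x₂ ≠ b := G.ne_of_adj e4
  have d10 : a ≠ b := G.ne_of_adj e5
  set f : V → Fin 5 := fun v =>
    if v = u then 0 else if v = x₁ then 1 else if v = a then 2 else if v = b then 3 else 4
    with hf
  set g : Fin 5 → V := ![u, x₁, a, b, x₂] with hg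
  have hfu : f u = 0 := by rw [hf]; simp
  have hfx₁ : f x₁ = 1 := by rw [hf]; simp [d1.symm]
  have hfa : f a = 2 := by rw [hf]; simp [d3.symm, d6.symm]
  have hfb : f b = 3 := by rw [hf]; simp [d4.symm, d7.symm, d10.symm]
  have hfx₂ : f x₂ = 4 := by rw [hf]; simp [d2.symm, d5.symm, d8, d9]
  have hli : Function.LeftInverse g f := by
    intro v
    rcases hV v with rfl | rfl | rfl | rfl | rfl
    · rw [hfu, hg]; rfl
    · rw [hfx₁, hg]; rfl
    · rw [hfx₂, hg]; rfl
    · rw [hfa, hg]; rfl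
    · rw [hfb, hg]; rfl
  have hri : Function.RightInverse g f := by
    intro i
    rcases i with ⟨iv, hiv⟩
    interval_cases iv
    · exact hfu
    · exact hfx₁
    · exact hfa
    · exact hfb
    · exact hfx₂
  refine ⟨⟨⟨f, g, hli, hri⟩, ?_⟩⟩
  intro v w
  show (SimpleGraph.cycleGraph 5).Adj (f v) (f w) ↔ G.Adj v w
  rcases hV v with rfl | rfl | rfl | rfl | rfl <;> rcases hV w with rfl | rfl | rfl | rfl | rfl <;>
    simp only [hfu, hfx₁, hfx₂, hfa, hfb]
  · exact iff_of_false (by decide) (G.loopless.irrefl _)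
  · exact iff_of_true (by decide) e1
  · exact iff_of_true (by decide) e2
  · exact iff_of_false (by decide) n2
  · exact iff_of_false (by decide) n3
  · exact iff_of_true (by decide) e1.symm
  · exact iff_of_false (by decide) (G.loopless.irrefl _)
  · exact iff_of_false (by decide) n1
  · exact iff_of_true (by decide) e3
  · exact iff_of_false (by decide) n4
  · exact iff_of_true (by decide) e2.symm
  · exact iff_of_false (by decide) (fun h => n1 h.symm)
  · exact iff_of_false (by decide) (G.loopless.irrefl _)
  · exact iff_of_false (by decide) n5
  · exact iff_of_true (by decide) e4
  · exact iff_of_false (by decide) (fun h => n2 h.symm)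
  · exact iff_of_true (by decide) e3.symm
  · exact iff_of_false (by decide) (fun h => n5 h.symm)
  · exact iff_of_false (by decide) (G.loopless.irrefl _)
  · exact iff_of_true (by decide) e5
  · exact iff_of_false (by decide) (fun h => n3 h.symm)
  · exact iff_of_false (by decide) (fun h => n4 h.symm)
  · exact iff_of_true (by decide) e4.symm
  · exact iff_of_true (by decide) e5.symm
  · exact iff_of_false (by decide) (G.loopless.irrefl _)
lemma K2_case [Fintype V] {G : SimpleGraph V} [DecidableRel G.Adj] {d : ℕ} (hd : 2 ≤ d)
    (hconn : G.Connected) (hcrit : DistCritical G d)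
    (hdeg : ∀ v : V, G.degree v ≤ 1) :
    Nonempty (G ≃g (⊤ : SimpleGraph (Fin 2))) := by
  classical
  have hdnum := hcrit.1
  obtain ⟨a, b, hab⟩ : ∃ a b : V, a ≠ b := by
    by_contra h
    push_neg at h
    have h1 : distNum G ≤ 1 := distNum_le (fun _ => ⟨0, one_pos⟩) (fun φ _ v => h _ _)
    omega
  obtain ⟨u, v, huv⟩ : ∃ u v, G.Adj u v := by
    obtain ⟨w⟩ := hconn a b
    cases w with
    | nil => exact absurd rfl hab
    | cons h _ => exact ⟨_, _, h⟩
  have hN : ∀ x y z : V, G.Adj x y → G.Adj x z → y = z := by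
    intro x y z hy hz
    by_contra hne
    have hsub : ({y, z} : Finset V) ⊆ G.neighborFinset x := by
      intro t ht
      rw [mem_insert, mem_singleton] at ht
      rw [mem_neighborFinset]
      rcases ht with rfl | rfl
      · exact hy
      · exact hz
    have h2 := card_le_card hsub
    rw [card_pair hne, card_neighborFinset_eq_degree] at h2
    have := hdeg x
    omega
  have hV : ∀ w, w = u ∨ w = v := by
    have main : ∀ n w, G.dist u w = n → w = u ∨ w = v := by
      intro n
      induction n using Nat.strong_induction_on with
      | _ n ih =>
        intro w hw
        rcases Nat.eq_zero_or_pos n with rfl | hpos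
        · exact Or.inl (dist_zero hconn hw)
        have hwu : w ≠ u := by
          intro e
          rw [e, SimpleGraph.dist_self] at hw
          omega
        obtain ⟨p, hpw, hpd⟩ := exists_pred hconn hwu
        have hp : p = u ∨ p = v := ih (n - 1) (by omega) p (by omega)
        rcases hp with rfl | rfl
        · exact Or.inr (hN p v w huv hpw).symm
        · exact Or.inl (hN p u w huv.symm hpw).symm
    exact fun w => main _ w rfl
  exact iso_K2 u v huv hV

lemma main_ge3 [Fintype V] [DecidableEq V] {G : SimpleGraph V} [DecidableRel G.Adj] {d : ℕ}
    (hd : 3 ≤ d) (hconn : G.Connected) (hcrit : DistCritical G d) (htf : G.CliqueFree 3) :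
    Nonempty (G ≃g completeBipartiteGraph (Fin (d-1)) (Fin (d-1))) ∨
    Nonempty (G ≃g SimpleGraph.cycleGraph 5) := by
  classical
  have hnem : Nonempty V := by
    by_contra h
    rw [not_nonempty_iff] at h
    have h1 : distNum G ≤ 0 :=
      distNum_le (fun x => (h.false x).elim) (fun φ _ x => (h.false x).elim)
    have := hcrit.1
    omega
  obtain ⟨u, hu⟩ := exists_maxdeg hd hconn hcrit htf
  set L1 := G.neighborFinset u with hL1
  set T : V → Finset V := fun w => (G.neighborFinset w).filter (fun p => G.Adj u p) with hT
  set M : V → Finset V := fun x => (G.neighborFinset x).erase u with hM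
  have hadjL1 : ∀ x ∈ L1, G.Adj u x := by
    intro x hx
    rw [hL1, mem_neighborFinset] at hx
    exact hx
  have hL1card : L1.card = d - 1 := by
    rw [hL1, card_neighborFinset_eq_degree, hu]
  have hF1 : ∀ x ∈ L1, G.degree x = d - 1 := fun x hx =>
    S1 hd hconn hcrit htf hu (hadjL1 x hx)
  have hMcard : ∀ x ∈ L1, (M x).card = d - 2 := by
    intro x hx
    have huNx : u ∈ G.neighborFinset x := by
      rw [mem_neighborFinset]
      exact (hadjL1 x hx).symm
    rw [hM]
    simp only
    rw [card_erase_of_mem huNx, card_neighborFinset_eq_degree, hF1 x hx]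
    omega
  have hMdist : ∀ x ∈ L1, ∀ w ∈ M x, G.dist u w = 2 := by
    intro x hx w hw
    exact dist_two_of_mem_Mx hconn htf (hadjL1 x hx) hw
  have hMadj : ∀ x, ∀ w ∈ M x, G.Adj x w := by
    intro x w hw
    simp only [hM, mem_erase, mem_neighborFinset] at hw
    exact hw.2
  have hMnu : ∀ x, ∀ w ∈ M x, w ≠ u := by
    intro x w hw
    simp only [hM, mem_erase] at hw
    exact hw.1
  have hmemM : ∀ x w, w ≠ u → G.Adj x w → w ∈ M x := by
    intro x w h1 h2
    simp only [hM, mem_erase, mem_neighborFinset]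
    exact ⟨h1, h2⟩
  have hkk2 : ∀ w, G.dist u w = 2 → kk G u w = (2, T w) := by
    intro w hw
    rw [kk_of_dist_two hconn hw, hT]
  have hF4 : ∀ x ∈ L1, ∀ w ∈ M x, ∀ w' ∈ M x, T w = T w' := by
    intro x hx w hw w' hw'
    by_contra hTne
    refine S2 hd hconn hcrit htf hu (hadjL1 x hx) hw hw' ?_
    rw [hkk2 w (hMdist x hx w hw), hkk2 w' (hMdist x hx w' hw')]
    simp [hTne]
  have hTsubL1 : ∀ w, T w ⊆ L1 := by
    intro w p hp
    simp only [hT, mem_filter] at hp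
    rw [hL1, mem_neighborFinset]
    exact hp.2
  have hTadj : ∀ w p, p ∈ T w → G.Adj w p := by
    intro w p hp
    simp only [hT, mem_filter, mem_neighborFinset] at hp
    exact hp.1
  have hmemT : ∀ w p, G.Adj w p → G.Adj u p → p ∈ T w := by
    intro w p h1 h2
    simp only [hT, mem_filter, mem_neighborFinset]
    exact ⟨h1, h2⟩
  have hxT : ∀ x ∈ L1, ∀ w ∈ M x, x ∈ T w := fun x hx w hw =>
    hmemT w x (hMadj x w hw).symm (hadjL1 x hx)
  have hMne : ∀ x, x ∈ L1 → ∃ y, y ∈ M x := by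
    intro x hx
    have : 0 < (M x).card := by rw [hMcard x hx]; omega
    exact card_pos.mp this
  choose W hW using hMne
  have hAT : ∀ x (hx : x ∈ L1), ∀ w ∈ M x, T w = T (W x hx) := fun x hx w hw =>
    hF4 x hx w hw (W x hx) (hW x hx)
  have hxA : ∀ x (hx : x ∈ L1), x ∈ T (W x hx) := fun x hx => hxT x hx (W x hx) (hW x hx)
  have hP4 : ∀ x (hx : x ∈ L1), ∀ y (hy : y ∈ L1), y ∈ T (W x hx) → M y = M x := by
    intro x hx y hy hyA
    have hsub : M x ⊆ M y := by
      intro w hw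
      have h1 : y ∈ T w := by rw [hAT x hx w hw]; exact hyA
      exact hmemM y w (hMnu x w hw) (hTadj w y h1).symm
    exact (eq_of_subset_of_card_le hsub
      (by rw [hMcard x hx, hMcard y hy])).symm
  have hP5 : ∀ x (hx : x ∈ L1), ∀ y (hy : y ∈ L1), y ∈ T (W x hx) →
      T (W y hy) = T (W x hx) := by
    intro x hx y hy hyA
    have hMeq : M y = M x := hP4 x hx y hy hyA
    have h1 : W y hy ∈ M x := by rw [← hMeq]; exact hW y hy
    exact hAT x hx (W y hy) h1
  by_cases hm1 : ∀ x (hx : x ∈ L1), ∀ y (hy : y ∈ L1), y ∈ T (W x hx)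
  · -- complete bipartite case
    left
    have hC1 : ∀ w, G.dist u w = 2 → ∀ x ∈ L1, G.Adj x w := by
      intro w hw x hx
      have hwu : w ≠ u := by
        intro e
        rw [e, SimpleGraph.dist_self] at hw
        omega
      obtain ⟨p, hpw, hpd⟩ := exists_pred hconn hwu
      have hpL1 : p ∈ L1 := by
        rw [hL1, mem_neighborFinset]
        exact SimpleGraph.dist_eq_one_iff_adj.mp (by omega)
      have hwM : w ∈ M p := hmemM p w hwu hpw
      have hxTw : x ∈ T w := by
        rw [hAT p hpL1 w hwM]
        exact hm1 p hpL1 x hx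
      exact (hTadj w x hxTw).symm
    have hdist2 : ∀ v : V, v ∉ L1 → v ≠ u → G.dist u v = 2 := by
      intro v hv hvu
      have hle := dist_le_two (by omega) hconn hcrit htf hu v
      have h0 : G.dist u v ≠ 0 := fun h => hvu (dist_zero hconn h)
      have h1 : G.dist u v ≠ 1 := fun h => hv (by
        rw [hL1, mem_neighborFinset]
        exact SimpleGraph.dist_eq_one_iff_adj.mp h)
      omega
    have hL1ne : L1.Nonempty := by
      rw [← card_pos, hL1card]
      omega
    have hadjiff : ∀ v w : V, G.Adj v w ↔ ((v ∈ L1 ∧ w ∉ L1) ∨ (v ∉ L1 ∧ w ∈ L1)) := by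
      intro v w
      constructor
      · intro hvw
        by_cases hv : v ∈ L1 <;> by_cases hw : w ∈ L1
        · exact absurd hvw (nbr_indep htf (hadjL1 v hv) (hadjL1 w hw))
        · exact Or.inl ⟨hv, hw⟩
        · exact Or.inr ⟨hv, hw⟩
        · exfalso
          by_cases hvu : v = u
          · subst hvu
            exact hw (by rw [hL1, mem_neighborFinset]; exact hvw)
          by_cases hwu : w = u
          · subst hwu
            exact hv (by rw [hL1, mem_neighborFinset]; exact hvw.symm)
          obtain ⟨x, hx⟩ := hL1ne
          exact nbr_indep htf (hC1 v (hdist2 v hv hvu) x hx) (hC1 w (hdist2 w hw hwu) x hx) hvw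
      · rintro (⟨h1, h2⟩ | ⟨h1, h2⟩)
        · by_cases hwu : w = u
          · subst hwu
            exact (hadjL1 v h1).symm
          · exact hC1 w (hdist2 w h2 hwu) v h1
        · by_cases hvu : v = u
          · subst hvu
            exact hadjL1 w h2
          · exact (hC1 v (hdist2 v h1 hvu) w h2).symm
    obtain ⟨x₀, hx₀⟩ := hL1ne
    have hucompl : u ∉ M x₀ := by simp [hM]
    have hcompl : L1ᶜ = insert u (M x₀) := by
      ext v
      rw [mem_compl, mem_insert]
      constructor
      · intro hv
        by_cases hvu : v = u
        · exact Or.inl hvu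
        · exact Or.inr (hmemM x₀ v hvu (hC1 v (hdist2 v hv hvu) x₀ hx₀))
      · rintro (rfl | hv)
        · rw [hL1, mem_neighborFinset]
          exact fun h => G.loopless.irrefl v h
        · intro hvL1
          have h2 := hMdist x₀ hx₀ v hv
          rw [hL1, mem_neighborFinset] at hvL1
          rw [SimpleGraph.dist_eq_one_iff_adj.mpr hvL1] at h2
          omega
    have hcardc : L1ᶜ.card = d - 1 := by
      rw [hcompl, card_insert_of_notMem hucompl, hMcard x₀ hx₀]
      omega
    exact iso_bipartite L1 hL1card hcardc hadjiff
  · push_neg at hm1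
    obtain ⟨x, hx, y, hy, hyA⟩ := hm1
    have hxy : x ≠ y := by
      rintro rfl
      exact hyA (hxA x hx)
    have hAxAy : ∀ z (hz : z ∈ L1), z ∈ T (W x hx) → z ∈ T (W y hy) → False := by
      intro z hz h1 h2
      have e1 := hP5 x hx z hz h1
      have e2 := hP5 y hy z hz h2
      rw [← e1, e2] at hyA
      exact hyA (hxA y hy)
    by_cases hcover : ∀ z ∈ L1, z ∈ T (W x hx) ∨ z ∈ T (W y hy)
    · by_cases hsx : 2 ≤ (T (W x hx)).card
      · exfalso
        obtain ⟨x', hx'A, hx'ne⟩ := Finset.exists_mem_ne hsx x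
        refine S3 hd hconn hcrit htf hu (hadjL1 x hx)
          (hadjL1 x' (hTsubL1 _ hx'A)) hx'ne (hW x hx)
          (hTadj (W x hx) x' hx'A).symm (hadjL1 y hy) ?_
        intro hcon
        exact hAxAy y hy (hmemT (W x hx) y hcon.symm (hadjL1 y hy)) (hxA y hy)
      · by_cases hsy : 2 ≤ (T (W y hy)).card
        · exfalso
          obtain ⟨y', hy'A, hy'ne⟩ := Finset.exists_mem_ne hsy y
          refine S3 hd hconn hcrit htf hu (hadjL1 y hy)
            (hadjL1 y' (hTsubL1 _ hy'A)) hy'ne (hW y hy)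
            (hTadj (W y hy) y' hy'A).symm (hadjL1 x hx) ?_
          intro hcon
          exact hAxAy x hx (hxA x hx) (hmemT (W y hy) x hcon.symm (hadjL1 x hx))
        · -- both traces are singletons: C₅ case
          right
          have hAx1 : (T (W x hx)).card = 1 := by
            have := card_pos.mpr ⟨x, hxA x hx⟩
            omega
          have hAy1 : (T (W y hy)).card = 1 := by
            have := card_pos.mpr ⟨y, hxA y hy⟩
            omega
          have hAxeq : T (W x hx) = {x} :=
            (Finset.eq_singleton_iff_unique_mem.mpr ⟨hxA x hx, fun z hz => by
              obtain ⟨t, ht⟩ := card_eq_one.mp hAx1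
              rw [ht, mem_singleton] at hz
              have := hxA x hx
              rw [ht, mem_singleton] at this
              rw [hz, this]⟩)
          have hAyeq : T (W y hy) = {y} :=
            (Finset.eq_singleton_iff_unique_mem.mpr ⟨hxA y hy, fun z hz => by
              obtain ⟨t, ht⟩ := card_eq_one.mp hAy1
              rw [ht, mem_singleton] at hz
              have := hxA y hy
              rw [ht, mem_singleton] at this
              rw [hz, this]⟩)
          have hL1eq : L1 = {x, y} := by
            apply subset_antisymm
            · intro z hz
              rw [mem_insert, mem_singleton]
              rcases hcover z hz with h | h
              · left; rw [hAxeq, mem_singleton] at h; exact h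
              · right; rw [hAyeq, mem_singleton] at h; exact h
            · intro z hz
              rw [mem_insert, mem_singleton] at hz
              rcases hz with rfl | rfl
              · exact hx
              · exact hy
          have hd3 : d = 3 := by
            have := hL1card
            rw [hL1eq, card_pair hxy] at this
            omega
          set wx := W x hx with hwx
          set wy := W y hy with hwy
          have hwxM : wx ∈ M x := hW x hx
          have hwyM : wy ∈ M y := hW y hy
          have hMxeq : M x = {wx} := by
            obtain ⟨t, ht⟩ := card_eq_one.mp (by rw [hMcard x hx, hd3] : (M x).card = 1)
            have := hwxM
            rw [ht, mem_singleton] at this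
            rw [ht, this]
          have hMyeq : M y = {wy} := by
            obtain ⟨t, ht⟩ := card_eq_one.mp (by rw [hMcard y hy, hd3] : (M y).card = 1)
            have := hwyM
            rw [ht, mem_singleton] at this
            rw [ht, this]
          have hwxwy : wx ≠ wy := by
            intro e
            have h1 : x ∈ T wx := hxA x hx
            rw [e] at h1
            exact hAxAy x hx (hxA x hx) h1
          have hdwx : G.dist u wx = 2 := hMdist x hx wx hwxM
          have hdwy : G.dist u wy = 2 := hMdist y hy wy hwyM
          have hnuwx : ¬ G.Adj u wx := by
            intro h
            rw [SimpleGraph.dist_eq_one_iff_adj.mpr h] at hdwx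
            omega
          have hnuwy : ¬ G.Adj u wy := by
            intro h
            rw [SimpleGraph.dist_eq_one_iff_adj.mpr h] at hdwy
            omega
          have hwxu : wx ≠ u := hMnu x wx hwxM
          have hwyu : wy ≠ u := hMnu y wy hwyM
          have hadjwxwy : G.Adj wx wy := by
            by_contra hcon
            refine no_big_indep (by omega) hconn hcrit ({u, wx, wy} : Finset V) ?_ ?_
            · rw [card_insert_of_notMem (by
                rw [mem_insert, mem_singleton]
                push_neg
                exact ⟨hwxu.symm, hwyu.symm⟩), card_pair hwxwy]
              omega
            · intro p hp q hq hpq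
              simp only [mem_insert, mem_singleton] at hp hq
              rcases hp with rfl | rfl | rfl <;> rcases hq with rfl | rfl | rfl
              · exact G.loopless.irrefl _ hpq
              · exact hnuwx hpq
              · exact hnuwy hpq
              · exact hnuwx hpq.symm
              · exact G.loopless.irrefl _ hpq
              · exact hcon hpq
              · exact hnuwy hpq.symm
              · exact hcon hpq.symm
              · exact G.loopless.irrefl _ hpq
          have hnxwy : ¬ G.Adj x wy := by
            intro h
            have h1 : x ∈ T wy := hmemT wy x h.symm (hadjL1 x hx)
            rw [hAyeq, mem_singleton] at h1
            exact hxy h1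
          have hnywx : ¬ G.Adj y wx := by
            intro h
            have h1 : y ∈ T wx := hmemT wx y h.symm (hadjL1 y hy)
            rw [hAxeq, mem_singleton] at h1
            exact hxy h1.symm
          have hVall : ∀ v : V, v = u ∨ v = x ∨ v = y ∨ v = wx ∨ v = wy := by
            intro v
            have hle := dist_le_two (by omega) hconn hcrit htf hu v
            interval_cases hdv : G.dist u v
            · exact Or.inl (dist_zero hconn hdv)
            · have : v ∈ L1 := by
                rw [hL1, mem_neighborFinset]
                exact SimpleGraph.dist_eq_one_iff_adj.mp hdv
              rw [hL1eq, mem_insert, mem_singleton] at this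
              rcases this with rfl | rfl
              · exact Or.inr (Or.inl rfl)
              · exact Or.inr (Or.inr (Or.inl rfl))
            · have hvu : v ≠ u := by
                intro e
                rw [e, SimpleGraph.dist_self] at hdv
                omega
              obtain ⟨p, hpv, hpd⟩ := exists_pred hconn hvu
              have hpL1 : p ∈ L1 := by
                rw [hL1, mem_neighborFinset]
                exact SimpleGraph.dist_eq_one_iff_adj.mp (by omega)
              have hvM : v ∈ M p := hmemM p v hvu hpv
              rw [hL1eq, mem_insert, mem_singleton] at hpL1
              rcases hpL1 with rfl | rfl
              · rw [hMxeq, mem_singleton] at hvM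
                exact Or.inr (Or.inr (Or.inr (Or.inl hvM)))
              · rw [hMyeq, mem_singleton] at hvM
                exact Or.inr (Or.inr (Or.inr (Or.inr hvM)))
          exact iso_C5 u x y wx wy hVall (hadjL1 x hx) (hadjL1 y hy)
            (hMadj x wx hwxM) (hMadj y wy hwyM) hadjwxwy
            (nbr_indep htf (hadjL1 x hx) (hadjL1 y hy)) hnuwx hnuwy hnxwy hnywx
    · push_neg at hcover
      obtain ⟨z, hz, hz1, hz2⟩ := hcover
      exfalso
      have hzx : z ≠ x := fun e => hz1 (e ▸ hxA x hx)
      have hzy : z ≠ y := fun e => hz2 (e ▸ hxA y hy)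
      have hxMz : x ∉ M z := by
        intro h
        have := hMdist z hz x h
        rw [SimpleGraph.dist_eq_one_iff_adj.mpr (hadjL1 x hx)] at this
        omega
      have hyMz : y ∉ M z := by
        intro h
        have := hMdist z hz y h
        rw [SimpleGraph.dist_eq_one_iff_adj.mpr (hadjL1 y hy)] at this
        omega
      refine no_big_indep (by omega) hconn hcrit (insert x (insert y (M z))) ?_ ?_
      · rw [card_insert_of_notMem (by
          rw [mem_insert]
          push_neg
          exact ⟨hxy, hxMz⟩), card_insert_of_notMem hyMz, hMcard z hz]
        omega
      · have hkey : ∀ t (ht : t ∈ L1), z ∉ T (W t ht) → ∀ w ∈ M z, ¬ G.Adj t w := by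
          intro t ht hnt w hw hadj
          have h1 : t ∈ T w := hmemT w t hadj.symm (hadjL1 t ht)
          rw [hAT z hz w hw] at h1
          have h2 := hP5 z hz t ht h1
          exact hnt (by rw [h2]; exact hxA z hz)
        intro p hp q hq hpq
        simp only [mem_insert] at hp hq
        rcases hp with rfl | rfl | hp
        · rcases hq with rfl | rfl | hq
          · exact G.loopless.irrefl _ hpq
          · exact nbr_indep htf (hadjL1 p hx) (hadjL1 q hy) hpq
          · exact hkey p hx hz1 q hq hpq
        · rcases hq with rfl | rfl | hq
          · exact nbr_indep htf (hadjL1 q hx) (hadjL1 p hy) hpq.symm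
          · exact G.loopless.irrefl _ hpq
          · exact hkey p hy hz2 q hq hpq
        · rcases hq with rfl | rfl | hq
          · exact hkey q hx hz1 p hp hpq.symm
          · exact hkey q hy hz2 p hp hpq.symm
          · exact nbr_indep htf (hMadj z p hp) (hMadj z q hq) hpq

end Crit

theorem stmt8 {V : Type*} [Fintype V] (G : SimpleGraph V) (d : ℕ) (hd : 2 ≤ d)
    (hconn : G.Connected) (hcrit : DistCritical G d)
    (htf : G.CliqueFree 3) :
    Nonempty (G ≃g (⊤ : SimpleGraph (Fin 2))) ∨
    Nonempty (G ≃g completeBipartiteGraph (Fin (d - 1)) (Fin (d - 1))) ∨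
    Nonempty (G ≃g SimpleGraph.cycleGraph 5) := by
  classical
  rcases Nat.lt_or_ge d 3 with hd3 | hd3
  · left
    have hdeg : ∀ v : V, G.degree v ≤ 1 := by
      intro v
      have := Crit.degree_le hd hconn hcrit htf v
      omega
    exact Crit.K2_case hd hconn hcrit hdeg
  · rcases Crit.main_ge3 hd3 hconn hcrit htf with h | h
    · exact Or.inr (Or.inl h)
    · exact Or.inr (Or.inr h)
end

section
/- If G is a disconnected d-distinguishing critical graph with d ≥ 3, then all connected components of G are pairwise isomorphic. -/
section Aux

open SimpleGraph

variable {V : Type*} {G : SimpleGraph V}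

private lemma lift_dist {r r' : ℕ} (h : r ≤ r') {f : V → Fin r}
    (hf : IsDistinguishing G r f) : IsDistinguishing G r' (Fin.castLE h ∘ f) :=
  fun φ hφ v => hf φ (fun w => Fin.castLE_injective h (hφ w)) v

private lemma exists_dist (G : SimpleGraph V) [Finite V] :
    {r : ℕ | ∃ f : V → Fin r, IsDistinguishing G r f}.Nonempty := by
  obtain ⟨n, ⟨e⟩⟩ := Finite.exists_equiv_fin V
  exact ⟨n, e, fun φ hφ v => e.injective (hφ v)⟩

private lemma distNum_mem (G : SimpleGraph V) [Finite V] :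
    ∃ f : V → Fin (distNum G), IsDistinguishing G (distNum G) f :=
  Nat.sInf_mem (exists_dist G)

private lemma distNum_le (G : SimpleGraph V) {r : ℕ} (f : V → Fin r)
    (hf : IsDistinguishing G r f) : distNum G ≤ r :=
  Nat.sInf_le ⟨f, hf⟩

/-- Extend an automorphism of the induced subgraph on a component-closed set `S`
by the identity outside `S`. -/
private lemma extend_iso {S : Set V} (hS : ∀ u w, G.Adj u w → (u ∈ S ↔ w ∈ S))
    (ψ : G.induce S ≃g G.induce S) :
    ∃ Φ : G ≃g G, (∀ v (h : v ∈ S), Φ v = ψ ⟨v, h⟩) ∧ ∀ v ∉ S, Φ v = v := by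
  classical
  let e : V ≃ V :=
  { toFun := fun v => if h : v ∈ S then (ψ ⟨v, h⟩ : V) else v
    invFun := fun v => if h : v ∈ S then (ψ.symm ⟨v, h⟩ : V) else v
    left_inv := by
      intro v; by_cases h : v ∈ S
      · simp only [dif_pos h, dif_pos (ψ ⟨v, h⟩).2, Subtype.coe_eta,
          RelIso.symm_apply_apply]
      · simp only [dif_neg h]
    right_inv := by
      intro v; by_cases h : v ∈ S
      · simp only [dif_pos h, dif_pos (ψ.symm ⟨v, h⟩).2, Subtype.coe_eta,
          RelIso.apply_symm_apply]
      · simp only [dif_neg h] }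
  have he : ∀ v (h : v ∈ S), e v = ψ ⟨v, h⟩ := fun v h => dif_pos h
  have he' : ∀ v, v ∉ S → e v = v := fun v h => dif_neg h
  have hin : ∀ v, e v ∈ S ↔ v ∈ S := by
    intro v; by_cases h : v ∈ S
    · rw [he v h]; exact iff_of_true (ψ ⟨v, h⟩).2 h
    · rw [he' v h]
  refine ⟨⟨e, ?_⟩, he, he'⟩
  intro a b
  by_cases ha : a ∈ S <;> by_cases hb : b ∈ S
  · rw [he a ha, he b hb]
    exact ψ.map_adj_iff
  · have h1 : ¬ G.Adj a b := fun h => hb ((hS a b h).mp ha)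
    have h2 : ¬ G.Adj (e a) (e b) :=
      fun h => hb ((hin b).mp ((hS _ _ h).mp ((hin a).mpr ha)))
    exact iff_of_false h2 h1
  · have h1 : ¬ G.Adj a b := fun h => ha ((hS a b h).mpr hb)
    have h2 : ¬ G.Adj (e a) (e b) :=
      fun h => ha ((hin a).mp ((hS _ _ h).mpr ((hin b).mpr hb)))
    exact iff_of_false h2 h1
  · rw [he' a ha, he' b hb]

/-- Restrict an automorphism of `G` to an invariant set. -/
private def restrictIso (φ : G ≃g G) {S : Set V} (hS : ∀ v, v ∈ S ↔ φ v ∈ S) :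
    G.induce S ≃g G.induce S :=
  ⟨φ.toEquiv.subtypeEquiv hS, by intro a b; exact φ.map_adj_iff⟩

/-- An automorphism maps each component isomorphically onto a component. -/
private lemma comp_iso (φ : G ≃g G) (v : V) :
    Nonempty (G.induce (G.connectedComponentMk v).supp ≃g
              G.induce (G.connectedComponentMk (φ v)).supp) := by
  have key : ∀ u, u ∈ (G.connectedComponentMk v).supp ↔
      φ u ∈ (G.connectedComponentMk (φ v)).supp := by
    intro u
    simp only [ConnectedComponent.mem_supp_iff, ConnectedComponent.eq]
    constructor
    · intro h; exact h.map φ.toHom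
    · intro h
      have h2 := h.map φ.symm.toHom
      simpa using h2
  exact ⟨⟨Equiv.subtypeEquiv φ.toEquiv key, by intro a b; exact φ.map_adj_iff⟩⟩

/-- The restriction of a distinguishing labeling to a component-closed set is
distinguishing. -/
private lemma dist_restrict {S : Set V} (hS : ∀ u w, G.Adj u w → (u ∈ S ↔ w ∈ S))
    {r : ℕ} {f : V → Fin r} (hf : IsDistinguishing G r f) :
    IsDistinguishing (G.induce S) r (fun x => f x) := by
  intro ψ hψ x
  obtain ⟨Φ, hΦ1, hΦ2⟩ := extend_iso hS ψ
  have hid : ∀ v, Φ v = v := by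
    apply hf Φ
    intro v
    by_cases h : v ∈ S
    · rw [hΦ1 v h]; exact hψ ⟨v, h⟩
    · rw [hΦ2 v h]
  apply Subtype.ext
  have h1 := hΦ1 x.1 x.2
  rw [Subtype.coe_eta] at h1
  rw [← h1, hid]

end Aux

theorem stmt11 {V : Type*} [Fintype V] (G : SimpleGraph V) (d : ℕ) (hd : 3 ≤ d)
    (hdisc : ¬ G.Preconnected) (hcrit : DistCritical G d) :
    ∀ c₁ c₂ : G.ConnectedComponent,
      Nonempty ((G.induce c₁.supp) ≃g (G.induce c₂.supp)) := by
  classical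
  intro c₁ c₂
  by_contra hiso
  set S : Set V :=
    {v | Nonempty (G.induce (G.connectedComponentMk v).supp ≃g G.induce c₁.supp)}
    with hSdef
  have hinv : ∀ (φ : G ≃g G) (v : V), v ∈ S ↔ φ v ∈ S := by
    intro φ v
    constructor
    · rintro ⟨e⟩; obtain ⟨e'⟩ := comp_iso φ v; exact ⟨e'.symm.trans e⟩
    · rintro ⟨e⟩; obtain ⟨e'⟩ := comp_iso φ v; exact ⟨e'.trans e⟩
  have hadj : ∀ u w, G.Adj u w → (u ∈ S ↔ w ∈ S) := by
    intro u w h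
    have hc : G.connectedComponentMk u = G.connectedComponentMk w :=
      SimpleGraph.ConnectedComponent.eq.mpr h.reachable
    show Nonempty _ ↔ Nonempty _
    rw [hc]
  have hadjc : ∀ u w, G.Adj u w → (u ∈ Sᶜ ↔ w ∈ Sᶜ) :=
    fun u w h => not_congr (hadj u w h)
  obtain ⟨v₁, hv₁'⟩ := c₁.exists_rep
  obtain ⟨v₂, hv₂'⟩ := c₂.exists_rep
  have hv₁ : G.connectedComponentMk v₁ = c₁ := hv₁'
  have hv₂ : G.connectedComponentMk v₂ = c₂ := hv₂'
  have hv1S : v₁ ∈ S := by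
    show Nonempty _
    rw [hv₁]
    exact ⟨RelIso.refl _⟩
  have hv2S : v₂ ∉ S := by
    intro hmem
    obtain ⟨e⟩ := hmem
    rw [hv₂] at e
    exact hiso ⟨e.symm⟩
  -- restriction inequalities
  obtain ⟨f0, hf0⟩ := distNum_mem G
  have hdSle : distNum (G.induce S) ≤ distNum G :=
    distNum_le _ _ (dist_restrict hadj hf0)
  have hdTle : distNum (G.induce Sᶜ) ≤ distNum G :=
    distNum_le _ _ (dist_restrict hadjc hf0)
  set dS := distNum (G.induce S) with hdS
  set dT := distNum (G.induce Sᶜ) with hdT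
  set r := max dS dT with hr
  -- combined labeling
  obtain ⟨fS, hfS⟩ := distNum_mem (G.induce S)
  obtain ⟨fT, hfT⟩ := distNum_mem (G.induce Sᶜ)
  have hfS' : IsDistinguishing (G.induce S) r (Fin.castLE (le_max_left dS dT) ∘ fS) :=
    lift_dist _ hfS
  have hfT' : IsDistinguishing (G.induce Sᶜ) r (Fin.castLE (le_max_right dS dT) ∘ fT) :=
    lift_dist _ hfT
  set gS : ↥S → Fin r := Fin.castLE (le_max_left dS dT) ∘ fS with hgS
  set gT : ↥(Sᶜ) → Fin r := Fin.castLE (le_max_right dS dT) ∘ fT with hgT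
  set g : V → Fin r := fun v => if h : v ∈ S then gS ⟨v, h⟩ else gT ⟨v, h⟩ with hg
  have hgdist : IsDistinguishing G r g := by
    intro φ hφ v
    have hinvφ : ∀ w, w ∈ S ↔ φ w ∈ S := hinv φ
    have hinvφc : ∀ w, w ∈ Sᶜ ↔ φ w ∈ Sᶜ := fun w => not_congr (hinvφ w)
    set ψS := restrictIso φ hinvφ with hψSdef
    set ψT := restrictIso φ hinvφc with hψTdef
    have hψS : ∀ x : ↥S, ψS x = x := by
      apply hfS' ψS
      intro x
      have h1 : (φ (x : V)) ∈ S := (hinvφ (x : V)).mp x.2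
      have h2 := hφ (x : V)
      simp only [hg] at h2
      rw [dif_pos h1, dif_pos x.2] at h2
      exact h2
    have hψT : ∀ x : ↥(Sᶜ), ψT x = x := by
      apply hfT' ψT
      intro x
      have h0 : (x : V) ∉ S := x.2
      have h1 : (φ (x : V)) ∉ S := (hinvφc (x : V)).mp x.2
      have h2 := hφ (x : V)
      simp only [hg] at h2
      rw [dif_neg h1, dif_neg h0] at h2
      exact h2
    by_cases h : v ∈ S
    · exact congrArg Subtype.val (hψS ⟨v, h⟩)
    · exact congrArg Subtype.val (hψT ⟨v, h⟩)
  have hle : distNum G ≤ r := distNum_le G g hgdist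
  have hge : r ≤ distNum G := max_le hdSle hdTle
  have heq : r = distNum G := le_antisymm hge hle
  rcases max_cases dS dT with ⟨h1, _⟩ | ⟨h1, _⟩
  · refine hcrit.2 S ?_ ?_
    · rw [Set.ne_univ_iff_exists_notMem]; exact ⟨v₂, hv2S⟩
    · show dS = d
      rw [← hcrit.1, ← heq, hr, h1]
  · refine hcrit.2 Sᶜ ?_ ?_
    · rw [Set.ne_univ_iff_exists_notMem]
      exact ⟨v₁, fun hcon => hcon hv1S⟩
    · show dT = d
      rw [← hcrit.1, ← heq, hr, h1]
end

section
/- If G is a 3-distinguishing critical graph, then the maximum degree of G is at most 2. -/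
/-- Auxiliary: a graph on 3 vertices that is either complete or empty has
distinguishing number 3. -/
lemma distNum_eq_three_aux {W : Type*} [Finite W] (G : SimpleGraph W)
    (hcard : Nat.card W = 3)
    (h : (∀ a b, G.Adj a b ↔ a ≠ b) ∨ (∀ a b, ¬ G.Adj a b)) :
    distNum G = 3 := by
  classical
  haveI : Fintype W := Fintype.ofFinite W
  have hc : Fintype.card W = 3 := by rw [← Nat.card_eq_fintype_card]; exact hcard
  have h3 : 3 ∈ {r : ℕ | ∃ f : W → Fin r, IsDistinguishing G r f} := by
    obtain e := Fintype.equivFinOfCardEq hc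
    exact ⟨e, fun φ hφ v => e.injective (hφ v)⟩
  refine le_antisymm (Nat.sInf_le h3) (le_csInf ⟨3, h3⟩ ?_)
  rintro r ⟨f, hf⟩
  by_contra hr
  push_neg at hr
  have finj : Function.Injective f := by
    intro a b hab
    by_contra hne
    have hswap : ∀ x y : W, G.Adj (Equiv.swap a b x) (Equiv.swap a b y) ↔ G.Adj x y := by
      rcases h with h | h
      · intro x y; rw [h, h]; exact (Equiv.swap a b).injective.ne_iff
      · intro x y; simp [h]
    let φ : G ≃g G := ⟨Equiv.swap a b, @fun x y => hswap x y⟩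
    have hpres : ∀ v, f (φ v) = f v := by
      intro v
      show f (Equiv.swap a b v) = f v
      rcases eq_or_ne v a with rfl | hva
      · rw [Equiv.swap_apply_left]; exact hab.symm
      rcases eq_or_ne v b with rfl | hvb
      · rw [Equiv.swap_apply_right]; exact hab
      · rw [Equiv.swap_apply_of_ne_of_ne hva hvb]
    have := hf φ hpres a
    have : b = a := by simpa [φ, Equiv.swap_apply_left] using this
    exact hne this.symm
  have := Fintype.card_le_of_injective f finj
  simp [hc] at this
  omega

theorem stmt16 {V : Type*} [Fintype V] (G : SimpleGraph V) [DecidableRel G.Adj]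
    (hcrit : DistCritical G 3) : G.maxDegree ≤ 2 := by
  classical
  by_contra hmax
  push_neg at hmax
  -- find a vertex of degree ≥ 3
  have hex : ∃ v, 3 ≤ G.degree v := by
    by_contra hv
    push_neg at hv
    have := SimpleGraph.maxDegree_le_of_forall_degree_le G 2 (fun v => by
      have := hv v; omega)
    omega
  obtain ⟨v, hv⟩ := hex
  rw [← SimpleGraph.card_neighborFinset_eq_degree] at hv
  -- extract three distinct neighbors w, y, z
  obtain ⟨w, hw⟩ := Finset.card_pos.mp (by omega : 0 < (G.neighborFinset v).card)
  have h2 : 0 < ((G.neighborFinset v).erase w).card := by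
    rw [Finset.card_erase_of_mem hw]; omega
  obtain ⟨y, hy⟩ := Finset.card_pos.mp h2
  have h3 : 0 < (((G.neighborFinset v).erase w).erase y).card := by
    rw [Finset.card_erase_of_mem hy, Finset.card_erase_of_mem hw]; omega
  obtain ⟨z, hz⟩ := Finset.card_pos.mp h3
  obtain ⟨hzy, hz'⟩ := Finset.mem_erase.mp hz
  obtain ⟨hzw, hzN⟩ := Finset.mem_erase.mp hz'
  obtain ⟨hyw, hyN⟩ := Finset.mem_erase.mp hy
  have hvw : G.Adj v w := (SimpleGraph.mem_neighborFinset G v w).mp hw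
  have hvy : G.Adj v y := (SimpleGraph.mem_neighborFinset G v y).mp hyN
  have hvz : G.Adj v z := (SimpleGraph.mem_neighborFinset G v z).mp hzN
  -- helper: three mutually adjacent vertices plus an outside vertex gives a contradiction
  have tri : ∀ a b c d : V, G.Adj a b → G.Adj a c → G.Adj b c →
      d ≠ a → d ≠ b → d ≠ c → False := by
    intro a b c d hab hac hbc hda hdb hdc
    set t : Finset V := {a, b, c} with ht
    have hcard : Nat.card ↥(↑t : Set V) = 3 := by
      rw [Nat.card_coe_set_eq, Set.ncard_coe_finset, ht]
      rw [Finset.card_insert_of_notMem (by simp [hab.ne, hac.ne]),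
        Finset.card_insert_of_notMem (by simp [hbc.ne]), Finset.card_singleton]
    have hne : (↑t : Set V) ≠ Set.univ := by
      intro hEq
      have hd : d ∈ (↑t : Set V) := hEq ▸ Set.mem_univ d
      simp only [ht, Finset.coe_insert, Finset.coe_singleton, Set.mem_insert_iff,
        Set.mem_singleton_iff] at hd
      rcases hd with rfl | rfl | rfl
      · exact hda rfl
      · exact hdb rfl
      · exact hdc rfl
    refine hcrit.2 (↑t : Set V) hne (distNum_eq_three_aux _ hcard (Or.inl ?_))
    rintro ⟨x, hx⟩ ⟨y', hy'⟩
    have hadj : (G.induce (↑t : Set V)).Adj ⟨x, hx⟩ ⟨y', hy'⟩ ↔ G.Adj x y' := Iff.rfl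
    rw [hadj, Ne, Subtype.mk_eq_mk]
    simp only [ht, Finset.coe_insert, Finset.coe_singleton, Set.mem_insert_iff,
      Set.mem_singleton_iff] at hx hy'
    constructor
    · exact fun h => h.ne
    · intro hxy
      rcases hx with rfl | rfl | rfl <;> rcases hy' with rfl | rfl | rfl <;>
        first
          | exact absurd rfl hxy
          | assumption
          | exact hab.symm
          | exact hac.symm
          | exact hbc.symm
  -- helper: three pairwise distinct non-adjacent vertices plus an outside vertex
  have emp : ∀ a b c d : V, a ≠ b → a ≠ c → b ≠ c →
      ¬ G.Adj a b → ¬ G.Adj a c → ¬ G.Adj b c →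
      d ≠ a → d ≠ b → d ≠ c → False := by
    intro a b c d hab hac hbc nab nac nbc hda hdb hdc
    set t : Finset V := {a, b, c} with ht
    have hcard : Nat.card ↥(↑t : Set V) = 3 := by
      rw [Nat.card_coe_set_eq, Set.ncard_coe_finset, ht]
      rw [Finset.card_insert_of_notMem (by simp [hab, hac]),
        Finset.card_insert_of_notMem (by simp [hbc]), Finset.card_singleton]
    have hne : (↑t : Set V) ≠ Set.univ := by
      intro hEq
      have hd : d ∈ (↑t : Set V) := hEq ▸ Set.mem_univ d
      simp only [ht, Finset.coe_insert, Finset.coe_singleton, Set.mem_insert_iff,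
        Set.mem_singleton_iff] at hd
      rcases hd with rfl | rfl | rfl
      · exact hda rfl
      · exact hdb rfl
      · exact hdc rfl
    refine hcrit.2 (↑t : Set V) hne (distNum_eq_three_aux _ hcard (Or.inr ?_))
    rintro ⟨x, hx⟩ ⟨y', hy'⟩
    show ¬ G.Adj x y'
    simp only [ht, Finset.coe_insert, Finset.coe_singleton, Set.mem_insert_iff,
      Set.mem_singleton_iff] at hx hy'
    rcases hx with rfl | rfl | rfl <;> rcases hy' with rfl | rfl | rfl <;>
      first
        | exact G.irrefl
        | assumption
        | exact fun h => nab h.symm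
        | exact fun h => nac h.symm
        | exact fun h => nbc h.symm
  -- case analysis on adjacency among the neighbors
  by_cases hwy : G.Adj w y
  · exact tri v w y z hvw hvy hwy hvz.ne' hzw hzy
  by_cases hwz : G.Adj w z
  · exact tri v w z y hvw hvz hwz hvy.ne' hyw (fun h => hzy h.symm)
  by_cases hyz : G.Adj y z
  · exact tri v y z w hvy hvz hyz hvw.ne' (fun h => hyw h.symm) (fun h => hzw h.symm)
  · exact emp w y z v (fun h => hyw h.symm) (fun h => hzw h.symm) (fun h => hzy h.symm)
      hwy hwz hyz hvw.ne hvy.ne hvz.ne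
end
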